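/- Let l be a diffusion on L₂(X), 𝔄 = D(l) ∩ L_∞(X), and let h ∈ C_l, i.e. h is a positive quadratic form with 𝔄 ⊆ D(h), h ≤ λ · l|_𝔄 for some λ > 0, 𝔄 dense in D(h), and h|_𝔄 strongly local and Markovian. Then the relaxation h₀ of h is a regular Dirichlet form with D(l) ⊆ D(h₀), and every core for the form l is a core for h₀. -/

import Mathlib

open MeasureTheory Filter Topology ENNReal Set
open scoped NNReal
open scoped RealInnerProductSpace

noncomputable section

namespace SmallTime

variable {X : Type*} [MetricSpace X] [MeasurableSpace X] [BorelSpace X]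

/-- A symmetric, positive, densely defined quadratic form on `L₂(X,μ)`, represented by
its domain (a set of function representatives, stable under a.e. modification) together
with the associated bilinear map. -/
structure QuadForm (X : Type*) [MeasurableSpace X] (μ : Measure X) : Type _ where
  dom : Set (X → ℝ)
  B : (X → ℝ) → (X → ℝ) → ℝ
  dom_memLp : ∀ f ∈ dom, MemLp f 2 μ
  dom_congr : ∀ f ∈ dom, ∀ g : X → ℝ, f =ᵐ[μ] g → g ∈ dom
  B_congr : ∀ f g f' g' : X → ℝ, f =ᵐ[μ] f' → g =ᵐ[μ] g' → B f g = B f' g'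
  zero_mem : (0 : X → ℝ) ∈ dom
  add_mem : ∀ f ∈ dom, ∀ g ∈ dom, f + g ∈ dom
  smul_mem : ∀ (c : ℝ), ∀ f ∈ dom, c • f ∈ dom
  symm : ∀ f g : X → ℝ, B f g = B g f
  add_left : ∀ f ∈ dom, ∀ g ∈ dom, ∀ k ∈ dom, B (f + g) k = B f k + B g k
  smul_left : ∀ (c : ℝ), ∀ f ∈ dom, ∀ g ∈ dom, B (c • f) g = c * B f g
  nonneg : ∀ f ∈ dom, 0 ≤ B f f
  dense_dom : ∀ f : X → ℝ, MemLp f 2 μ → ∀ ε : ℝ, 0 < ε →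
    ∃ g ∈ dom, eLpNorm (f - g) 2 μ < ENNReal.ofReal ε

variable {μ : Measure X}

/-- The diagonal `E(f) = E(f,f)` of the form. -/
def QuadForm.Q (E : QuadForm X μ) (f : X → ℝ) : ℝ := E.B f f

/-- `f ∈ L_∞(X,μ)` (essentially bounded). -/
def MemLinf (μ : Measure X) (f : X → ℝ) : Prop := ∃ C : ℝ, ∀ᵐ x ∂μ, |f x| ≤ C

/-- The algebra `𝔄 = D(E) ∩ L_∞(X)`. -/
def QuadForm.Adom (E : QuadForm X μ) : Set (X → ℝ) := {f | f ∈ E.dom ∧ MemLinf μ f}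

/-- The form `E` is Markovian on the subset `S` of its domain: for every `ε > 0`
there is a Markovian cut-off `F` leaving `S` invariant and decreasing the form. -/
def MarkovianOn (E : QuadForm X μ) (S : Set (X → ℝ)) : Prop :=
  ∀ ε : ℝ, 0 < ε → ∃ F : ℝ → ℝ,
    (∀ t ∈ Icc (0:ℝ) 1, F t = t) ∧ (∀ t : ℝ, -ε ≤ F t ∧ F t ≤ 1 + ε) ∧
    (∀ s t : ℝ, s ≤ t → 0 ≤ F t - F s ∧ F t - F s ≤ t - s) ∧
    ∀ f ∈ S, (F ∘ f) ∈ S ∧ E.Q (F ∘ f) ≤ E.Q f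

/-- The form `E` is Markovian. -/
def Markovian (E : QuadForm X μ) : Prop := MarkovianOn E E.dom

/-- The form `E` is closed (completeness of the domain for the form norm). -/
def Closed (E : QuadForm X μ) : Prop :=
  ∀ (f : ℕ → X → ℝ) (g : X → ℝ), (∀ n, f n ∈ E.dom) → MemLp g 2 μ →
    Tendsto (fun n => eLpNorm (f n - g) 2 μ) atTop (𝓝 0) →
    (∀ ε : ℝ, 0 < ε → ∃ N : ℕ, ∀ m ≥ N, ∀ n ≥ N, E.Q (f m - f n) < ε) →
    g ∈ E.dom ∧ Tendsto (fun n => E.Q (f n - g)) atTop (𝓝 0)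

/-- Square of the natural form norm `φ ↦ (E(φ) + ‖φ‖₂²)^(1/2)`. -/
def QuadForm.formNormSq (E : QuadForm X μ) (f : X → ℝ) : ℝ :=
  E.Q f + ((eLpNorm f 2 μ).toReal) ^ 2

/-- `C` is a core of the form `E` (dense in the domain for the form norm). -/
def IsCore (E : QuadForm X μ) (C : Set (X → ℝ)) : Prop :=
  C ⊆ E.dom ∧ ∀ f ∈ E.dom, ∀ ε : ℝ, 0 < ε → ∃ g ∈ C, E.formNormSq (f - g) < ε

/-- The form `E` is regular: it has a core consisting of continuous compactly supported
functions which is moreover uniformly dense in `C₀(X)`. -/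
def Regular (E : QuadForm X μ) : Prop :=
  ∃ C : Set (X → ℝ), (∀ f ∈ C, Continuous f ∧ HasCompactSupport f) ∧ IsCore E C ∧
    ∀ f : X → ℝ, Continuous f → Tendsto f (cocompact X) (𝓝 0) →
      ∀ ε : ℝ, 0 < ε → ∃ g ∈ C, ∀ x, |f x - g x| ≤ ε

/-- `g` is constant on a neighbourhood of the support of `f`. -/
def ConstOnNhdOfSupport (f g : X → ℝ) : Prop :=
  ∃ (U : Set X) (c : ℝ), IsOpen U ∧ tsupport f ⊆ U ∧ ∀ x ∈ U, g x = c

/-- The form `E` is strongly local on the subset `S` of its domain. -/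
def StronglyLocalOn (E : QuadForm X μ) (S : Set (X → ℝ)) : Prop :=
  ∀ f ∈ S, ∀ g ∈ S, HasCompactSupport f → HasCompactSupport g →
    ConstOnNhdOfSupport f g → E.B g f = 0

/-- The form `E` is strongly local. -/
def StronglyLocal (E : QuadForm X μ) : Prop := StronglyLocalOn E E.dom

/-- A diffusion is a strongly local regular Dirichlet form (a Dirichlet form being a
closed Markovian form). -/
def IsDiffusion (E : QuadForm X μ) : Prop :=
  Closed E ∧ Markovian E ∧ Regular E ∧ StronglyLocal E

/-- The truncated form `I_ψ(φ) = E(ψφ,ψ) − 2⁻¹ E(ψ²,φ)`. -/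
def IFun (E : QuadForm X μ) (ψ φ : X → ℝ) : ℝ :=
  E.B (ψ * φ) ψ - (1/2) * E.B (ψ * ψ) φ

/-- The local domain `D(E)_loc`. -/
def locDom (E : QuadForm X μ) : Set (X → ℝ) :=
  {f | Measurable f ∧ ∀ K : Set X, IsCompact K → ∃ g ∈ E.dom, ∀ᵐ x ∂μ, x ∈ K → f x = g x}

/-- `g` is a bounded element of `D(E)` agreeing a.e. with `ψ` on the support of `φ`. -/
def IhatSpec (E : QuadForm X μ) (ψ φ g : X → ℝ) : Prop :=
  g ∈ E.dom ∧ MemLinf μ g ∧ ∀ᵐ x ∂μ, x ∈ tsupport φ → ψ x = g x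

open Classical in
/-- The localized truncated form `Î_ψ(φ) = I_ψ̂(φ)`, where `ψ̂ ∈ D(E) ∩ L_∞` agrees with
`ψ` on the support of `φ`. -/
def Ihat (E : QuadForm X μ) (ψ φ : X → ℝ) : ℝ :=
  if h : ∃ g : X → ℝ, IhatSpec E ψ φ g then IFun E h.choose φ else 0

/-- `|||Î_ψ||| ∈ [0,∞]`. -/
def Inorm (E : QuadForm X μ) (ψ : X → ℝ) : ℝ≥0∞ :=
  ⨆ (φ : X → ℝ) (_ : φ ∈ E.dom) (_ : MemLinf μ φ) (_ : HasCompactSupport φ)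
    (_ : eLpNorm φ 1 μ ≤ 1), ENNReal.ofReal |Ihat E ψ φ|

/-- `D₀(E) = {ψ ∈ D(E)_loc ∩ L_∞ : |||Î_ψ||| ≤ 1}`. -/
def D0 (E : QuadForm X μ) : Set (X → ℝ) :=
  {ψ | ψ ∈ locDom E ∧ MemLinf μ ψ ∧ Inorm E ψ ≤ 1}

/-- The set-theoretic distance
`d^{(E)}(A;B) = sup {d_ψ(A;B) : ψ ∈ D₀(E)} ∈ [0,∞]`, where
`d_ψ(A;B) = ess inf_A ψ − ess sup_B ψ` is the largest `M` with `ψ(x) − ψ(y) ≥ M`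
for a.e. `x ∈ A` and a.e. `y ∈ B`. -/
def formDist (E : QuadForm X μ) (A B : Set X) : ℝ≥0∞ :=
  ⨆ (ψ : X → ℝ) (_ : ψ ∈ D0 E) (M : ℝ≥0)
    (_ : ∀ᵐ x ∂μ.restrict A, ∀ᵐ y ∂μ.restrict B, (M : ℝ) ≤ ψ x - ψ y),
    (M : ℝ≥0∞)

/-- The pointwise pseudo-distance
`d^{(e)}(x;y) = sup {|ψ(x)−ψ(y)| : ψ ∈ D(l)_loc ∩ C_b(X), |||Î_ψ||| ≤ 1}`. -/
def de (l : QuadForm X μ) (x y : X) : ℝ≥0∞ :=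
  ⨆ (ψ : X → ℝ) (_ : ψ ∈ locDom l) (_ : Continuous ψ) (_ : ∃ C : ℝ, ∀ z, |ψ z| ≤ C)
    (_ : Inorm l ψ ≤ 1), ENNReal.ofReal |ψ x - ψ y|

/-- `d^{(e)}(A;B) = inf_{x ∈ A} inf_{y ∈ B} d^{(e)}(x;y)`. -/
def deSet (l : QuadForm X μ) (A B : Set X) : ℝ≥0∞ :=
  ⨅ (x ∈ A) (y ∈ B), de l x y

/-- Condition L: `d^{(e)}` is a metric inducing the topology of `X`, with relatively
compact balls. -/
def ConditionL (l : QuadForm X μ) : Prop :=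
  (∀ x y : X, de l x y ≠ ∞) ∧
  (∀ x y : X, de l x y = 0 ↔ x = y) ∧
  (∀ U : Set X, IsOpen U ↔ ∀ x ∈ U, ∃ ε : ℝ≥0∞, 0 < ε ∧ {y | de l x y < ε} ⊆ U) ∧
  (∀ (x : X) (r : ℝ), 0 < r → IsCompact (closure {y | de l x y < ENNReal.ofReal r}))

/-- `k ≤ h` as forms: `D(h) ⊆ D(k)` and `k(f) ≤ h(f)` for `f ∈ D(h)`. -/
def FormLE (k h : QuadForm X μ) : Prop :=
  h.dom ⊆ k.dom ∧ ∀ f ∈ h.dom, k.Q f ≤ h.Q f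

/-- `h₀` is the relaxation of `h`: the largest closed form majorized by `h`. -/
def IsRelaxation (h h₀ : QuadForm X μ) : Prop :=
  Closed h₀ ∧ FormLE h₀ h ∧ ∀ k : QuadForm X μ, Closed k → FormLE k h → FormLE k h₀

/-- `h ∈ C_l`: `𝔄 ⊆ D(h)`, `h ≤ λ l|_𝔄` for some `λ > 0`, `𝔄` dense in `D(h)`, and
`h|_𝔄` strongly local and Markovian. -/
def MemCl (l h : QuadForm X μ) : Prop :=
  l.Adom ⊆ h.dom ∧ (∃ lam : ℝ, 0 < lam ∧ ∀ f ∈ l.Adom, h.Q f ≤ lam * l.Q f) ∧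
  (∀ f ∈ h.dom, ∀ ε : ℝ, 0 < ε → ∃ g ∈ l.Adom, h.formNormSq (f - g) < ε) ∧
  StronglyLocalOn h l.Adom ∧ MarkovianOn h l.Adom

abbrev L2 (μ : Measure X) := Lp ℝ 2 μ

/-- `S` is the symmetric strongly continuous contraction semigroup generated by the
positive self-adjoint operator associated with the closed form `E`, characterized by
the standard variational formulas relating `E` to `t⁻¹(f − S_t f, f)`. -/
def IsAssociatedSemigroup (E : QuadForm X μ) (S : ℝ → L2 μ →L[ℝ] L2 μ) : Prop :=
  S 0 = ContinuousLinearMap.id ℝ (L2 μ) ∧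
  (∀ s t : ℝ, 0 ≤ s → 0 ≤ t → S (s + t) = (S s).comp (S t)) ∧
  (∀ t : ℝ, 0 ≤ t → ∀ f g : L2 μ, ⟪S t f, g⟫ = ⟪f, S t g⟫) ∧
  (∀ t : ℝ, 0 ≤ t → ‖S t‖ ≤ 1) ∧
  (∀ f : L2 μ, Tendsto (fun t => S t f) (𝓝[≥] (0:ℝ)) (𝓝 f)) ∧
  ∀ (f : X → ℝ) (hf : MemLp f 2 μ),
    (f ∈ E.dom ↔ ∃ C : ℝ, ∀ t : ℝ, 0 < t →
        t⁻¹ * ⟪hf.toLp - S t hf.toLp, hf.toLp⟫ ≤ C) ∧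
    (f ∈ E.dom → Tendsto (fun t : ℝ => t⁻¹ * ⟪hf.toLp - S t hf.toLp, hf.toLp⟫)
        (𝓝[>] (0:ℝ)) (𝓝 (E.Q f)))

/-- `f ∈ L₂(A)`: `f` vanishes a.e. outside `A`. -/
def MemL2On (μ : Measure X) (A : Set X) (f : L2 μ) : Prop :=
  ∀ᵐ x ∂μ, x ∉ A → (f : X → ℝ) x = 0

/-- `e^{-a}` for `a ∈ [0,∞]`, with the convention `e^{-∞} = 0`. -/
def expNegENN (a : ℝ≥0∞) : ℝ := if a = ∞ then 0 else Real.exp (-a.toReal)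

/-- Extended-real logarithm, with `log x = -∞` for `x ≤ 0`. -/
def elog (x : ℝ) : EReal := if x ≤ 0 then (⊥ : EReal) else ((Real.log x : ℝ) : EReal)

/-- `-4⁻¹ d²` as an extended real (`= -∞` when `d = ∞`). -/
def negQuarterSq (d : ℝ≥0∞) : EReal :=
  ((-(1/4 : ℝ) : ℝ) : EReal) * ((d ^ 2 : ℝ≥0∞) : EReal)

/-- The indicator function `𝟙_A` as an element of `L₂`. -/
def indL2 (μ : Measure X) (A : Set X) (hA : MeasurableSet A) (h : μ A ≠ ∞) : L2 μ :=
  indicatorConstLp 2 hA h (1 : ℝ)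

/-- `lim_{t↓0} t log (iA, S_t iB) = −4⁻¹ d²`. -/
def SmallTimeLimit {μ : Measure X} (S : ℝ → L2 μ →L[ℝ] L2 μ) (iA iB : L2 μ)
    (d : ℝ≥0∞) : Prop :=
  Tendsto (fun t : ℝ => ((t : ℝ) : EReal) * elog ⟪iA, S t iB⟫) (𝓝[>] (0:ℝ))
    (𝓝 (negQuarterSq d))

/-- `u = (I + H)⁻¹ f` for the operator `H` associated with the form `E`. -/
def IsResolventAt (E : QuadForm X μ) (f u : X → ℝ) : Prop :=
  u ∈ E.dom ∧ ∀ v ∈ E.dom, E.B u v + ∫ x, u x * v x ∂μ = ∫ x, f x * v x ∂μ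

/-- `E = r.lim_{ε↓0} F(ε)`: strong resolvent convergence as `ε ↓ 0`. -/
def RLimAt0 (F : ℝ → QuadForm X μ) (E : QuadForm X μ) : Prop :=
  ∀ (f u : X → ℝ), MemLp f 2 μ → IsResolventAt E f u →
    ∀ U : ℝ → X → ℝ, (∀ ε : ℝ, 0 < ε → IsResolventAt (F ε) f (U ε)) →
    Tendsto (fun ε => eLpNorm (fun x => U ε x - u x) 2 μ) (𝓝[>] (0:ℝ)) (𝓝 0)

/-- `C t = cos(t H^{1/2})` for the positive self-adjoint operator `H` associated with
the closed form `E`, characterized by the cosine functional equations together with the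
Gaussian transform relation to the associated semigroup. -/
def IsCosineFamily (E : QuadForm X μ) (C : ℝ → L2 μ →L[ℝ] L2 μ) : Prop :=
  C 0 = ContinuousLinearMap.id ℝ (L2 μ) ∧
  (∀ t : ℝ, C (-t) = C t) ∧
  (∀ s t : ℝ, C (s + t) + C (s - t) = (2 : ℝ) • ((C s).comp (C t))) ∧
  (∀ t : ℝ, ‖C t‖ ≤ 1) ∧
  (∀ (t : ℝ) (f g : L2 μ), ⟪C t f, g⟫ = ⟪f, C t g⟫) ∧
  (∀ f : L2 μ, Continuous fun t : ℝ => C t f) ∧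
  ∀ S : ℝ → L2 μ →L[ℝ] L2 μ, IsAssociatedSemigroup E S → ∀ t : ℝ, 0 < t → ∀ f g : L2 μ,
    ⟪g, S t f⟫ = (Real.pi * t) ^ (-(1/2) : ℝ) *
      ∫ s in Ioi (0:ℝ), Real.exp (-(s^2) / (4*t)) * ⟪g, C s f⟫

/-- `P` is the orthogonal projection of `L₂(X)` onto `L₂(A)` (multiplication by `𝟙_A`). -/
def IsIndicatorProjection (μ : Measure X) (A : Set X) (P : L2 μ →L[ℝ] L2 μ) : Prop :=
  ∀ f : L2 μ, (P f : X → ℝ) =ᵐ[μ] A.indicator (f : X → ℝ)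

/-- `kv = k + v` where `v` is the form of multiplication by `V ≥ 0`. -/
def IsSumWithMult (V : X → ℝ) (k kv : QuadForm X μ) : Prop :=
  kv.dom = {f | f ∈ k.dom ∧ Integrable (fun x => V x * (f x)^2) μ} ∧
  ∀ f ∈ kv.dom, kv.Q f = k.Q f + ∫ x, V x * (f x)^2 ∂μ

/-! ### Auxiliary lemmas for the proof of Lemma 3.7 -/

section Aux

variable {Y : Type*} [MeasurableSpace Y] {μ : Measure Y}

namespace QuadForm

variable (E : QuadForm Y μ)

lemma neg_mem' {f : Y → ℝ} (hf : f ∈ E.dom) : -f ∈ E.dom := by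
  have := E.smul_mem (-1) f hf
  simpa [neg_one_smul] using this

lemma sub_mem' {f g : Y → ℝ} (hf : f ∈ E.dom) (hg : g ∈ E.dom) : f - g ∈ E.dom := by
  have := E.add_mem f hf (-g) (E.neg_mem' hg)
  simpa [sub_eq_add_neg] using this

lemma B_add_right {f g k : Y → ℝ} (hf : f ∈ E.dom) (hg : g ∈ E.dom) (hk : k ∈ E.dom) :
    E.B k (f + g) = E.B k f + E.B k g := by
  rw [E.symm k, E.add_left f hf g hg k hk, E.symm f, E.symm g]

lemma B_smul_right (c : ℝ) {f g : Y → ℝ} (hf : f ∈ E.dom) (hg : g ∈ E.dom) :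
    E.B g (c • f) = c * E.B g f := by
  rw [E.symm g, E.smul_left c f hf g hg, E.symm f]

lemma Q_zero : E.Q 0 = 0 := by
  have := E.smul_left 0 0 E.zero_mem 0 E.zero_mem
  simpa [QuadForm.Q] using this

lemma Q_nonneg' {f : Y → ℝ} (hf : f ∈ E.dom) : 0 ≤ E.Q f := E.nonneg f hf

lemma Q_add' {f g : Y → ℝ} (hf : f ∈ E.dom) (hg : g ∈ E.dom) :
    E.Q (f + g) = E.Q f + 2 * E.B f g + E.Q g := by
  unfold QuadForm.Q
  rw [E.add_left f hf g hg (f + g) (E.add_mem f hf g hg), E.B_add_right hf hg hf,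
    E.B_add_right hf hg hg, E.symm g f]
  ring

lemma Q_smul' (c : ℝ) {f : Y → ℝ} (hf : f ∈ E.dom) : E.Q (c • f) = c ^ 2 * E.Q f := by
  unfold QuadForm.Q
  rw [E.smul_left c f hf _ (E.smul_mem c f hf), E.B_smul_right c hf hf]
  ring

lemma Q_neg' {f : Y → ℝ} (hf : f ∈ E.dom) : E.Q (-f) = E.Q f := by
  have := E.Q_smul' (-1) hf
  simpa [neg_one_smul] using this

lemma Q_sub' {f g : Y → ℝ} (hf : f ∈ E.dom) (hg : g ∈ E.dom) :
    E.Q (f - g) = E.Q f - 2 * E.B f g + E.Q g := by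
  have h1 : f - g = f + (-1 : ℝ) • g := by funext x; simp [sub_eq_add_neg]
  rw [h1, E.Q_add' hf (E.smul_mem _ _ hg), E.B_smul_right (-1) hg hf,
    E.Q_smul' (-1) hg]
  ring

lemma Q_sub_comm {f g : Y → ℝ} (hf : f ∈ E.dom) (hg : g ∈ E.dom) :
    E.Q (f - g) = E.Q (g - f) := by
  rw [E.Q_sub' hf hg, E.Q_sub' hg hf, E.symm g f]; ring

lemma parallelogram {f g : Y → ℝ} (hf : f ∈ E.dom) (hg : g ∈ E.dom) :
    E.Q (f + g) + E.Q (f - g) = 2 * E.Q f + 2 * E.Q g := by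
  rw [E.Q_add' hf hg, E.Q_sub' hf hg]; ring

lemma B_sq_le {f g : Y → ℝ} (hf : f ∈ E.dom) (hg : g ∈ E.dom) :
    (E.B f g) ^ 2 ≤ E.Q f * E.Q g := by
  have key : ∀ t : ℝ, 0 ≤ E.Q g * (t * t) + (2 * E.B f g) * t + E.Q f := by
    intro t
    have h1 : 0 ≤ E.Q (f + t • g) := E.Q_nonneg' (E.add_mem _ hf _ (E.smul_mem t g hg))
    have h2 : E.Q (f + t • g) = E.Q f + 2 * (t * E.B f g) + t ^ 2 * E.Q g := by
      rw [E.Q_add' hf (E.smul_mem t g hg), E.B_smul_right t hg hf, E.Q_smul' t hg]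
    nlinarith [h1, h2]
  have := discrim_le_zero key
  rw [discrim] at this
  nlinarith

lemma abs_B_le {f g : Y → ℝ} (hf : f ∈ E.dom) (hg : g ∈ E.dom) :
    |E.B f g| ≤ Real.sqrt (E.Q f) * Real.sqrt (E.Q g) := by
  have h1 := E.B_sq_le hf hg
  have h2 : |E.B f g| = Real.sqrt ((E.B f g) ^ 2) := (Real.sqrt_sq_eq_abs _).symm
  rw [h2, ← Real.sqrt_mul (E.Q_nonneg' hf)]
  exact Real.sqrt_le_sqrt h1

lemma B_le_sqrt {f g : Y → ℝ} (hf : f ∈ E.dom) (hg : g ∈ E.dom) :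
    E.B f g ≤ Real.sqrt (E.Q f) * Real.sqrt (E.Q g) :=
  le_trans (le_abs_self _) (E.abs_B_le hf hg)

lemma Q_add_le {f g : Y → ℝ} (hf : f ∈ E.dom) (hg : g ∈ E.dom) :
    E.Q (f + g) ≤ 2 * E.Q f + 2 * E.Q g := by
  have := E.parallelogram hf hg
  have := E.Q_nonneg' (E.sub_mem' hf hg)
  linarith

lemma Q_add_le_sq {f g : Y → ℝ} (hf : f ∈ E.dom) (hg : g ∈ E.dom) :
    E.Q (f + g) ≤ (Real.sqrt (E.Q f) + Real.sqrt (E.Q g)) ^ 2 := by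
  have h1 := E.Q_add' hf hg
  have h2 := E.B_le_sqrt hf hg
  have h3 : Real.sqrt (E.Q f) ^ 2 = E.Q f := Real.sq_sqrt (E.Q_nonneg' hf)
  have h4 : Real.sqrt (E.Q g) ^ 2 = E.Q g := Real.sq_sqrt (E.Q_nonneg' hg)
  nlinarith

end QuadForm

/-- `L²` distance-to-zero as a real number. -/
def nd (μ : Measure Y) (f : Y → ℝ) : ℝ := (eLpNorm f 2 μ).toReal

lemma nd_nonneg {f : Y → ℝ} : 0 ≤ nd μ f := ENNReal.toReal_nonneg

lemma nd_congr {f g : Y → ℝ} (h : f =ᵐ[μ] g) : nd μ f = nd μ g := by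
  unfold nd; rw [eLpNorm_congr_ae h]

lemma nd_zero : nd μ (0 : Y → ℝ) = 0 := by simp [nd]

lemma nd_neg {f : Y → ℝ} : nd μ (-f) = nd μ f := by simp [nd, eLpNorm_neg]

lemma nd_sub_comm {f g : Y → ℝ} : nd μ (f - g) = nd μ (g - f) := by
  rw [← nd_neg (f := f - g), neg_sub]

lemma nd_add_le {f g : Y → ℝ} (hf : MemLp f 2 μ) (hg : MemLp g 2 μ) :
    nd μ (f + g) ≤ nd μ f + nd μ g := by
  unfold nd
  have h1 : eLpNorm (f + g) 2 μ ≤ eLpNorm f 2 μ + eLpNorm g 2 μ :=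
    eLpNorm_add_le hf.aestronglyMeasurable hg.aestronglyMeasurable one_le_two
  have h2 : eLpNorm f 2 μ + eLpNorm g 2 μ ≠ ⊤ :=
    ENNReal.add_ne_top.mpr ⟨hf.eLpNorm_ne_top, hg.eLpNorm_ne_top⟩
  calc (eLpNorm (f + g) 2 μ).toReal ≤ (eLpNorm f 2 μ + eLpNorm g 2 μ).toReal :=
        ENNReal.toReal_mono h2 h1
    _ = (eLpNorm f 2 μ).toReal + (eLpNorm g 2 μ).toReal :=
        ENNReal.toReal_add hf.eLpNorm_ne_top hg.eLpNorm_ne_top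

lemma nd_smul (c : ℝ) (f : Y → ℝ) : nd μ (c • f) = |c| * nd μ f := by
  unfold nd
  rw [eLpNorm_const_smul]
  simp [ENNReal.toReal_mul, Real.norm_eq_abs]

lemma nd_eq_norm_toLp {f : Y → ℝ} (hf : MemLp f 2 μ) : nd μ f = ‖hf.toLp f‖ :=
  (MeasureTheory.Lp.norm_toLp f hf).symm

lemma nd_parallelogram {f g : Y → ℝ} (hf : MemLp f 2 μ) (hg : MemLp g 2 μ) :
    nd μ (f + g) ^ 2 + nd μ (f - g) ^ 2 = 2 * nd μ f ^ 2 + 2 * nd μ g ^ 2 := by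
  have hpar := parallelogram_law_with_norm ℝ (hf.toLp f) (hg.toLp g)
  have h1 : nd μ (f + g) = ‖hf.toLp f + hg.toLp g‖ := by
    rw [nd_eq_norm_toLp (hf.add hg), MemLp.toLp_add]
  have h2 : nd μ (f - g) = ‖hf.toLp f - hg.toLp g‖ := by
    rw [nd_eq_norm_toLp (hf.sub hg), MemLp.toLp_sub]
  have h3 : nd μ f = ‖hf.toLp f‖ := nd_eq_norm_toLp hf
  have h4 : nd μ g = ‖hg.toLp g‖ := nd_eq_norm_toLp hg
  rw [h1, h2, h3, h4]
  nlinarith [hpar]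

lemma tendsto_eLpNorm_of_nd {u : ℕ → Y → ℝ} (hfin : ∀ n, MemLp (u n) 2 μ)
    (h : Tendsto (fun n => nd μ (u n)) atTop (𝓝 0)) :
    Tendsto (fun n => eLpNorm (u n) 2 μ) atTop (𝓝 0) := by
  have heq : ∀ n, eLpNorm (u n) 2 μ = ENNReal.ofReal (nd μ (u n)) := fun n =>
    (ENNReal.ofReal_toReal (hfin n).eLpNorm_ne_top).symm
  simp only [heq]
  have : Tendsto ENNReal.ofReal (𝓝 0) (𝓝 (ENNReal.ofReal 0)) :=
    ENNReal.continuous_ofReal.tendsto 0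
  simpa [Function.comp_def] using this.comp h

lemma tendsto_nd_of_eLpNorm {u : ℕ → Y → ℝ}
    (h : Tendsto (fun n => eLpNorm (u n) 2 μ) atTop (𝓝 0)) :
    Tendsto (fun n => nd μ (u n)) atTop (𝓝 0) := by
  have := (ENNReal.tendsto_toReal (a := 0) (by simp)).comp h
  simpa [nd, Function.comp_def] using this

end Aux
section BS

variable {Y : Type*} [MeasurableSpace Y] {μ : Measure Y}

/-- Lower semicontinuity of a closed form along `L²`-convergent sequences that are
bounded in form sense (Banach–Saks type lemma, proved via Moreau envelopes). -/
lemma closed_lsc {E : QuadForm Y μ} (hE : Closed E) {u : ℕ → Y → ℝ} {g : Y → ℝ} {C : ℝ}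
    (hu : ∀ n, u n ∈ E.dom) (hg : MemLp g 2 μ)
    (hL2 : Tendsto (fun n => eLpNorm (u n - g) 2 μ) atTop (𝓝 0))
    (hQ : ∀ n, E.Q (u n) ≤ C) : g ∈ E.dom ∧ E.Q g ≤ C := by
  classical
  set d : (Y → ℝ) → ℝ := fun v => nd μ (g - v) with hd_def
  have hdnn : ∀ v, 0 ≤ d v := fun v => nd_nonneg
  have hdu : Tendsto (fun n => d (u n)) atTop (𝓝 0) := by
    have h1 : Tendsto (fun n => nd μ (u n - g)) atTop (𝓝 0) := tendsto_nd_of_eLpNorm hL2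
    have h2 : (fun n => d (u n)) = fun n => nd μ (u n - g) := funext fun n => nd_sub_comm
    rw [h2]; exact h1
  set Mset : ℕ → Set ℝ := fun n => (fun v => E.Q v + ((n : ℝ) + 1) * (d v) ^ 2) '' E.dom
    with hMset_def
  have hMne : ∀ n, (Mset n).Nonempty := fun n => ⟨_, u 0, hu 0, rfl⟩
  have hMnn : ∀ n, ∀ x ∈ Mset n, (0:ℝ) ≤ x := by
    rintro n x ⟨v, hv, rfl⟩
    have h1 := E.Q_nonneg' hv
    have h2 : (0:ℝ) ≤ ((n : ℝ) + 1) * (d v) ^ 2 := by positivity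
    have h3 : (0:ℝ) ≤ E.Q v + ((n : ℝ) + 1) * (d v) ^ 2 := by linarith
    exact h3
  set M : ℕ → ℝ := fun n => sInf (Mset n) with hM_def
  have hMlb : ∀ n, BddBelow (Mset n) := fun n => ⟨0, fun x hx => hMnn n x hx⟩
  have hM_le : ∀ (n : ℕ) (v : Y → ℝ), v ∈ E.dom →
      M n ≤ E.Q v + ((n : ℝ) + 1) * (d v) ^ 2 := fun n v hv => csInf_le (hMlb n) ⟨v, hv, rfl⟩
  have hMC : ∀ n, M n ≤ C := by
    intro n
    have hlim : Tendsto (fun k => C + ((n : ℝ) + 1) * (d (u k)) ^ 2) atTop (𝓝 C) := by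
      have h1 : Tendsto (fun k => (d (u k)) ^ 2) atTop (𝓝 0) := by
        have := hdu.pow 2; simpa using this
      have h2 := (h1.const_mul ((n : ℝ) + 1)).const_add C
      simpa using h2
    refine ge_of_tendsto' hlim fun k => ?_
    calc M n ≤ E.Q (u k) + ((n : ℝ) + 1) * (d (u k)) ^ 2 := hM_le n (u k) (hu k)
      _ ≤ C + ((n : ℝ) + 1) * (d (u k)) ^ 2 := by
          have := hQ k; linarith
  have hMmono : Monotone M := by
    intro n m hnm
    apply le_csInf (hMne m)
    rintro x ⟨v, hv, rfl⟩
    have hc : ((n : ℝ) + 1) ≤ ((m : ℝ) + 1) := by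
      have : (n : ℝ) ≤ (m : ℝ) := by exact_mod_cast hnm
      linarith
    calc M n ≤ E.Q v + ((n : ℝ) + 1) * (d v) ^ 2 := hM_le n v hv
      _ ≤ E.Q v + ((m : ℝ) + 1) * (d v) ^ 2 := by nlinarith [sq_nonneg (d v)]
  have hinvpos : ∀ n : ℕ, (0:ℝ) < 1 / ((n : ℝ) + 1) := fun n => by positivity
  have hinvle1 : ∀ n : ℕ, 1 / ((n : ℝ) + 1) ≤ 1 := by
    intro n
    rw [div_le_one (by positivity)]
    have : (0:ℝ) ≤ (n : ℝ) := Nat.cast_nonneg n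
    linarith
  have hsel : ∀ n : ℕ, ∃ w, w ∈ E.dom ∧
      E.Q w + ((n : ℝ) + 1) * (d w) ^ 2 < M n + 1 / ((n : ℝ) + 1) := by
    intro n
    obtain ⟨x, hx, hlt⟩ := Real.lt_sInf_add_pos (hMne n) (hinvpos n)
    obtain ⟨w, hw, rfl⟩ := hx
    exact ⟨w, hw, hlt⟩
  choose v hvdom hvval using hsel
  have hQv_le : ∀ n, E.Q (v n) ≤ M n + 1 / ((n : ℝ) + 1) := by
    intro n
    have h1 := hvval n
    have h2 : (0:ℝ) ≤ ((n : ℝ) + 1) * (d (v n)) ^ 2 := by positivity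
    linarith
  have hQvC : ∀ n, E.Q (v n) ≤ C + 1 := fun n =>
    le_trans (hQv_le n) (by have := hMC n; have := hinvle1 n; linarith)
  -- the key almost-minimizer Cauchy estimate
  have key : ∀ n m : ℕ, n ≤ m →
      E.Q (v n - v m) ≤ 2 * (M m - M n) + 2 * (1 / ((n : ℝ) + 1)) + 2 * (1 / ((m : ℝ) + 1)) := by
    intro n m hnm
    set w : Y → ℝ := (1/2 : ℝ) • (v n + v m) with hw_def
    have haddmem : v n + v m ∈ E.dom := E.add_mem _ (hvdom n) _ (hvdom m)
    have hwdom : w ∈ E.dom := E.smul_mem _ _ haddmem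
    have h1 : M n ≤ E.Q w + ((n : ℝ) + 1) * (d w) ^ 2 := hM_le n w hwdom
    have hQw : 4 * E.Q w = 2 * E.Q (v n) + 2 * E.Q (v m) - E.Q (v n - v m) := by
      have hpar := E.parallelogram (hvdom n) (hvdom m)
      have h2 : E.Q w = (1/2 : ℝ) ^ 2 * E.Q (v n + v m) := E.Q_smul' _ haddmem
      nlinarith [hpar, h2]
    have hdw : 4 * (d w) ^ 2 + (nd μ (v n - v m)) ^ 2
        = 2 * (d (v n)) ^ 2 + 2 * (d (v m)) ^ 2 := by
      have hmem1 : MemLp (g - v n) 2 μ := hg.sub (E.dom_memLp _ (hvdom n))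
      have hmem2 : MemLp (g - v m) 2 μ := hg.sub (E.dom_memLp _ (hvdom m))
      have hp := nd_parallelogram hmem1 hmem2
      have e1 : (g - v n) + (g - v m) = (2:ℝ) • (g - w) := by
        funext x; simp [hw_def, Pi.smul_apply, smul_eq_mul]; ring
      have e2 : (g - v n) - (g - v m) = v m - v n := by funext x; simp
      rw [e1, e2, nd_smul] at hp
      have e3 : nd μ (v m - v n) = nd μ (v n - v m) := nd_sub_comm
      rw [e3] at hp
      have e4 : |(2:ℝ)| = 2 := by norm_num
      rw [e4] at hp
      have e5 : d w = nd μ (g - w) := rfl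
      rw [← e5] at hp
      nlinarith [hp]
    have hdw' : 4 * (((n : ℝ) + 1) * (d w) ^ 2)
        = 2 * (((n : ℝ) + 1) * (d (v n)) ^ 2) + 2 * (((n : ℝ) + 1) * (d (v m)) ^ 2)
          - ((n : ℝ) + 1) * (nd μ (v n - v m)) ^ 2 := by
      linear_combination ((n : ℝ) + 1) * hdw
    have h2 := hvval n
    have h3 := hvval m
    have hc : ((n : ℝ) + 1) ≤ ((m : ℝ) + 1) := by
      have : (n : ℝ) ≤ (m : ℝ) := by exact_mod_cast hnm
      linarith
    have hmono2 : ((n : ℝ) + 1) * (d (v m)) ^ 2 ≤ ((m : ℝ) + 1) * (d (v m)) ^ 2 := by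
      nlinarith [sq_nonneg (d (v m))]
    have hnd2 : 0 ≤ ((n : ℝ) + 1) * (nd μ (v n - v m)) ^ 2 := by positivity
    linarith [h1, hQw, hdw', h2, h3, hmono2, hnd2]
  have hMbddAbove : BddAbove (Set.range M) := ⟨C, by rintro x ⟨n, rfl⟩; exact hMC n⟩
  have hMtend : Tendsto M atTop (𝓝 (⨆ n, M n)) := tendsto_atTop_ciSup hMmono hMbddAbove
  have hMcauchy : CauchySeq M := hMtend.cauchySeq
  have hvCauchy : ∀ ε : ℝ, 0 < ε → ∃ N, ∀ m ≥ N, ∀ n ≥ N, E.Q (v m - v n) < ε := by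
    intro ε hε
    obtain ⟨N1, hN1⟩ := Metric.cauchySeq_iff'.mp hMcauchy (ε/8) (by positivity)
    obtain ⟨N2, hN2⟩ := exists_nat_one_div_lt (show (0:ℝ) < ε/8 by positivity)
    refine ⟨max N1 N2, fun m hm n hn => ?_⟩
    have hmN1 : N1 ≤ m := le_trans (le_max_left _ _) hm
    have hnN1 : N1 ≤ n := le_trans (le_max_left _ _) hn
    have hmN2 : N2 ≤ m := le_trans (le_max_right _ _) hm
    have hnN2 : N2 ≤ n := le_trans (le_max_right _ _) hn
    have hdist1 : |M m - M N1| < ε/8 := by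
      have := hN1 m hmN1; rwa [Real.dist_eq] at this
    have hdist2 : |M n - M N1| < ε/8 := by
      have := hN1 n hnN1; rwa [Real.dist_eq] at this
    have hMdiff : M m - M n < ε/4 ∧ M n - M m < ε/4 := by
      constructor <;> [skip; skip] <;>
        · cases' abs_lt.mp hdist1 with a1 a2
          cases' abs_lt.mp hdist2 with b1 b2
          linarith
    have hinvm : 1 / ((m : ℝ) + 1) < ε/8 := by
      have h1 : 1 / ((m : ℝ) + 1) ≤ 1 / ((N2 : ℝ) + 1) := by
        apply one_div_le_one_div_of_le (by positivity)
        have : (N2 : ℝ) ≤ (m : ℝ) := by exact_mod_cast hmN2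
        linarith
      linarith
    have hinvn : 1 / ((n : ℝ) + 1) < ε/8 := by
      have h1 : 1 / ((n : ℝ) + 1) ≤ 1 / ((N2 : ℝ) + 1) := by
        apply one_div_le_one_div_of_le (by positivity)
        have : (N2 : ℝ) ≤ (n : ℝ) := by exact_mod_cast hnN2
        linarith
      linarith
    rcases le_total m n with hle | hle
    · have := key m n hle
      linarith [hMdiff.2]
    · have := key n m hle
      have hcomm : E.Q (v m - v n) = E.Q (v n - v m) := E.Q_sub_comm (hvdom m) (hvdom n)
      rw [hcomm]
      linarith [hMdiff.1]
  have hvL2' : Tendsto (fun n => nd μ (v n - g)) atTop (𝓝 0) := by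
    have hb : ∀ n : ℕ, nd μ (v n - g) ≤ Real.sqrt ((C+1) * (1/((n:ℝ)+1))) := by
      intro n
      have hdsq : (d (v n)) ^ 2 ≤ (C+1) * (1/((n:ℝ)+1)) := by
        have h2 := hvval n
        have h3 := E.Q_nonneg' (hvdom n)
        have h4 := hMC n
        have h5 := hinvle1 n
        have hn1 : (0:ℝ) < (n:ℝ) + 1 := by positivity
        rw [mul_one_div, le_div_iff₀ hn1]
        nlinarith
      have he : nd μ (v n - g) = d (v n) := nd_sub_comm
      rw [he]
      exact Real.le_sqrt_of_sq_le hdsq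
    apply squeeze_zero (fun n => nd_nonneg) hb
    have h1 : Tendsto (fun n : ℕ => (C+1) * (1/((n:ℝ)+1))) atTop (𝓝 0) := by
      have := tendsto_one_div_add_atTop_nhds_zero_nat.const_mul (C+1)
      simpa using this
    have := (Real.continuous_sqrt.tendsto' 0 0 Real.sqrt_zero).comp h1
    exact this
  have hvL2 : Tendsto (fun n => eLpNorm (v n - g) 2 μ) atTop (𝓝 0) :=
    tendsto_eLpNorm_of_nd (fun n => (E.dom_memLp _ (hvdom n)).sub hg) hvL2'
  obtain ⟨hgdom, hQconv⟩ := hE v g hvdom hg hvL2 hvCauchy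
  refine ⟨hgdom, ?_⟩
  have hfin : ∀ n : ℕ, E.Q g ≤ (C + 1/((n:ℝ)+1))
      + 2 * Real.sqrt (C+1) * Real.sqrt (E.Q (v n - g)) + E.Q (v n - g) := by
    intro n
    have hsub : g - v n ∈ E.dom := E.sub_mem' hgdom (hvdom n)
    have hexp : E.Q g = E.Q (v n) + 2 * E.B (v n) (g - v n) + E.Q (g - v n) := by
      have he : g = v n + (g - v n) := by funext x; simp
      calc E.Q g = E.Q (v n + (g - v n)) := by rw [← he]
        _ = _ := E.Q_add' (hvdom n) hsub
    have hcomm : E.Q (g - v n) = E.Q (v n - g) := E.Q_sub_comm hgdom (hvdom n)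
    have hB := E.B_le_sqrt (hvdom n) hsub
    have h1 : Real.sqrt (E.Q (v n)) ≤ Real.sqrt (C+1) := Real.sqrt_le_sqrt (hQvC n)
    have h5 : E.B (v n) (g - v n) ≤ Real.sqrt (C+1) * Real.sqrt (E.Q (g - v n)) :=
      le_trans hB (mul_le_mul_of_nonneg_right h1 (Real.sqrt_nonneg _))
    rw [hcomm] at h5
    have h6 := hQv_le n
    have h7 := hMC n
    rw [hexp, hcomm]
    linarith
  have hR : Tendsto (fun n : ℕ => (C + 1/((n:ℝ)+1))
      + 2 * Real.sqrt (C+1) * Real.sqrt (E.Q (v n - g)) + E.Q (v n - g)) atTop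
      (𝓝 ((C + 0) + 2 * Real.sqrt (C+1) * Real.sqrt 0 + 0)) := by
    refine Tendsto.add (Tendsto.add ?_ ?_) ?_
    · exact tendsto_const_nhds.add tendsto_one_div_add_atTop_nhds_zero_nat
    · have := ((Real.continuous_sqrt.tendsto' 0 0 Real.sqrt_zero).comp hQconv).const_mul
        (2 * Real.sqrt (C+1))
      simpa [Function.comp] using this
    · exact hQconv
  have := ge_of_tendsto' hR hfin
  simpa using this

end BS
section Relax

variable {Y : Type*} [MeasurableSpace Y] {μ : Measure Y}

lemma real_le_of_forall_pos_le_add {a b : ℝ} (H : ∀ ε : ℝ, 0 < ε → a ≤ b + ε) : a ≤ b := by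
  by_contra hab
  push_neg at hab
  have := H ((a - b)/2) (by linarith)
  linarith

/-- The admissible constants for the relaxed value of `h` at `f`. -/
def Sset (h : QuadForm Y μ) (f : Y → ℝ) : Set ℝ :=
  {c | ∀ δ : ℝ, 0 < δ → ∃ a ∈ h.dom, nd μ (f - a) < δ ∧ h.Q a < c + δ}

/-- The domain of the relaxation of `h`. -/
def SD (h : QuadForm Y μ) : Set (Y → ℝ) := {f | MemLp f 2 μ ∧ (Sset h f).Nonempty}

/-- The relaxed (lower semicontinuous envelope) value of `h` at `f`. -/
def Sval (h : QuadForm Y μ) (f : Y → ℝ) : ℝ := sInf (Sset h f)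

variable (h : QuadForm Y μ)

lemma Sset_nonneg {f : Y → ℝ} {c : ℝ} (hc : c ∈ Sset h f) : 0 ≤ c := by
  by_contra hneg
  push_neg at hneg
  obtain ⟨a, ha, -, hQa⟩ := hc (-c) (by linarith)
  have := h.Q_nonneg' ha
  linarith

lemma Sset_bdd (f : Y → ℝ) : BddBelow (Sset h f) := ⟨0, fun _ hc => Sset_nonneg h hc⟩

lemma Sval_nonneg (f : Y → ℝ) : 0 ≤ Sval h f :=
  Real.sInf_nonneg fun _ hc => Sset_nonneg h hc

lemma Sval_le {f : Y → ℝ} {c : ℝ} (hc : c ∈ Sset h f) : Sval h f ≤ c :=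
  csInf_le (Sset_bdd h f) hc

lemma mem_SD {f : Y → ℝ} {c : ℝ} (hmem : MemLp f 2 μ) (hc : c ∈ Sset h f) : f ∈ SD h :=
  ⟨hmem, ⟨c, hc⟩⟩

lemma S_recover {f : Y → ℝ} (hf : f ∈ SD h) {δ : ℝ} (hδ : 0 < δ) :
    ∃ a ∈ h.dom, nd μ (f - a) < δ ∧ h.Q a < Sval h f + δ := by
  obtain ⟨c, hc, hlt⟩ := Real.lt_sInf_add_pos hf.2 (half_pos hδ)
  obtain ⟨a, ha, hnd, hQa⟩ := hc (δ/2) (half_pos hδ)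
  exact ⟨a, ha, lt_of_lt_of_le hnd (by linarith), by
    change c < Sval h f + δ/2 at hlt
    linarith⟩

lemma S_lb {f : Y → ℝ} (hf : f ∈ SD h) {ε : ℝ} (hε : 0 < ε) :
    ∃ δ₀ : ℝ, 0 < δ₀ ∧ ∀ a ∈ h.dom, nd μ (f - a) < δ₀ → Sval h f ≤ h.Q a + ε := by
  by_contra hcon
  push_neg at hcon
  have hmem : (Sval h f - ε) ∈ Sset h f := by
    intro δ hδ
    obtain ⟨a, ha, hnd, hQa⟩ := hcon δ hδ
    exact ⟨a, ha, hnd, by linarith⟩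
  have := Sval_le h hmem
  linarith

lemma dom_subset_SD : h.dom ⊆ SD h := by
  intro a ha
  refine ⟨h.dom_memLp a ha, ⟨h.Q a, ?_⟩⟩
  intro δ hδ
  exact ⟨a, ha, by simp [nd, sub_self, hδ], by linarith⟩

lemma Sval_le_Q {a : Y → ℝ} (ha : a ∈ h.dom) : Sval h a ≤ h.Q a := by
  apply Sval_le h
  intro δ hδ
  exact ⟨a, ha, by simp [nd, sub_self, hδ], by linarith⟩

lemma Sset_congr {f g : Y → ℝ} (hfg : f =ᵐ[μ] g) : Sset h f = Sset h g := by
  ext c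
  constructor <;> intro hc δ hδ <;> obtain ⟨a, ha, hnd, hQa⟩ := hc δ hδ <;>
    refine ⟨a, ha, ?_, hQa⟩
  · have hae : (g - a : Y → ℝ) =ᵐ[μ] (f - a) := hfg.symm.sub EventuallyEq.rfl
    rw [nd_congr hae]; exact hnd
  · have hae : (f - a : Y → ℝ) =ᵐ[μ] (g - a) := hfg.sub EventuallyEq.rfl
    rw [nd_congr hae]; exact hnd

lemma SD_congr' {f g : Y → ℝ} (hf : f ∈ SD h) (hfg : f =ᵐ[μ] g) : g ∈ SD h :=
  ⟨hf.1.ae_eq hfg, by rw [← Sset_congr h hfg]; exact hf.2⟩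

lemma Sval_congr' {f g : Y → ℝ} (hfg : f =ᵐ[μ] g) : Sval h f = Sval h g := by
  unfold Sval; rw [Sset_congr h hfg]

lemma Sset_smul {f : Y → ℝ} (hf : f ∈ SD h) (t : ℝ) :
    (t^2 * Sval h f) ∈ Sset h (t • f) := by
  intro δ hδ
  have hpos : (0:ℝ) < t^2 + |t| + 1 := by positivity
  set δ' := δ / (t^2 + |t| + 1) with hδ'def
  have hδ'pos : 0 < δ' := by positivity
  have hδeq : (t^2 + |t| + 1) * δ' = δ := by
    rw [hδ'def]; field_simp
  obtain ⟨a, ha, hnd, hQa⟩ := S_recover h hf hδ'pos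
  refine ⟨t • a, h.smul_mem t a ha, ?_, ?_⟩
  · have he : t • f - t • a = t • (f - a) := (smul_sub t f a).symm
    rw [he, nd_smul]
    have h1 : |t| * nd μ (f - a) ≤ |t| * δ' := mul_le_mul_of_nonneg_left hnd.le (abs_nonneg t)
    nlinarith [abs_nonneg t, sq_nonneg t, hδ'pos]
  · rw [h.Q_smul' t ha]
    have h1 : t^2 * h.Q a ≤ t^2 * (Sval h f + δ') :=
      mul_le_mul_of_nonneg_left hQa.le (sq_nonneg t)
    nlinarith [abs_nonneg t, sq_nonneg t, hδ'pos]

lemma SD_smul {f : Y → ℝ} (hf : f ∈ SD h) (t : ℝ) : t • f ∈ SD h :=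
  mem_SD h (hf.1.const_smul t) (Sset_smul h hf t)

lemma Sval_smul_le {f : Y → ℝ} (hf : f ∈ SD h) (t : ℝ) :
    Sval h (t • f) ≤ t^2 * Sval h f := Sval_le h (Sset_smul h hf t)

lemma SD_zero : (0 : Y → ℝ) ∈ SD h := dom_subset_SD h h.zero_mem

lemma Sval_zero : Sval h 0 = 0 :=
  le_antisymm (le_trans (Sval_le_Q h h.zero_mem) (le_of_eq h.Q_zero)) (Sval_nonneg h 0)

lemma Sval_smul {f : Y → ℝ} (hf : f ∈ SD h) (t : ℝ) : Sval h (t • f) = t^2 * Sval h f := by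
  rcases eq_or_ne t 0 with rfl | ht
  · rw [zero_smul]
    simp [Sval_zero h]
  · refine le_antisymm (Sval_smul_le h hf t) ?_
    have h2 := Sval_smul_le h (SD_smul h hf t) t⁻¹
    rw [smul_smul, inv_mul_cancel₀ ht, one_smul] at h2
    have h3 : t^2 * Sval h f ≤ t^2 * ((t⁻¹)^2 * Sval h (t • f)) :=
      mul_le_mul_of_nonneg_left h2 (sq_nonneg t)
    have h4 : t^2 * ((t⁻¹)^2 * Sval h (t • f)) = Sval h (t • f) := by
      field_simp
    linarith

lemma SD_neg {f : Y → ℝ} (hf : f ∈ SD h) : -f ∈ SD h := by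
  have := SD_smul h hf (-1)
  simpa [neg_one_smul] using this

lemma Sval_neg {f : Y → ℝ} (hf : f ∈ SD h) : Sval h (-f) = Sval h f := by
  have := Sval_smul h hf (-1)
  simp only [neg_one_smul] at this
  simpa using this

lemma Sset_add {f g : Y → ℝ} (hf : f ∈ SD h) (hg : g ∈ SD h) :
    (2 * Sval h f + 2 * Sval h g) ∈ Sset h (f + g) := by
  intro δ hδ
  have hδ4 : 0 < δ/4 := by positivity
  obtain ⟨a, ha, hnd1, hQ1⟩ := S_recover h hf hδ4
  obtain ⟨b, hb, hnd2, hQ2⟩ := S_recover h hg hδ4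
  refine ⟨a + b, h.add_mem a ha b hb, ?_, ?_⟩
  · have he : (f + g) - (a + b) = (f - a) + (g - b) := by funext x; simp; ring
    rw [he]
    calc nd μ ((f - a) + (g - b)) ≤ nd μ (f - a) + nd μ (g - b) :=
        nd_add_le (hf.1.sub (h.dom_memLp a ha)) (hg.1.sub (h.dom_memLp b hb))
      _ < δ := by linarith
  · have := h.Q_add_le ha hb
    linarith

lemma SD_add {f g : Y → ℝ} (hf : f ∈ SD h) (hg : g ∈ SD h) : f + g ∈ SD h :=
  mem_SD h (hf.1.add hg.1) (Sset_add h hf hg)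

lemma SD_sub {f g : Y → ℝ} (hf : f ∈ SD h) (hg : g ∈ SD h) : f - g ∈ SD h := by
  have := SD_add h hf (SD_neg h hg)
  simpa [sub_eq_add_neg] using this

lemma Sval_par {x y : Y → ℝ} (hx : x ∈ SD h) (hy : y ∈ SD h) :
    Sval h (x + y) + Sval h (x - y) = 2 * Sval h x + 2 * Sval h y := by
  have hxy : x + y ∈ SD h := SD_add h hx hy
  have hxy' : x - y ∈ SD h := SD_sub h hx hy
  apply le_antisymm
  · apply real_le_of_forall_pos_le_add
    intro ε hε
    have hε6 : 0 < ε/6 := by positivity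
    obtain ⟨δ₁, hδ₁, hlb1⟩ := S_lb h hxy hε6
    obtain ⟨δ₂, hδ₂, hlb2⟩ := S_lb h hxy' hε6
    have h0 : 0 < min δ₁ δ₂ := lt_min hδ₁ hδ₂
    set δ := min (min δ₁ δ₂ / 2) (ε/6) with hδdef
    have hδpos : 0 < δ := lt_min (by linarith) hε6
    obtain ⟨a, ha, hnda, hQa⟩ := S_recover h hx hδpos
    obtain ⟨b, hb, hndb, hQb⟩ := S_recover h hy hδpos
    have hm1 : min δ₁ δ₂ ≤ δ₁ := min_le_left _ _
    have hm2 : min δ₁ δ₂ ≤ δ₂ := min_le_right _ _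
    have hδle : δ ≤ min δ₁ δ₂ / 2 := min_le_left _ _
    have hδε : δ ≤ ε/6 := min_le_right _ _
    have hndsum : nd μ ((x + y) - (a + b)) < δ₁ := by
      have he : (x + y) - (a + b) = (x - a) + (y - b) := by funext t; simp; ring
      rw [he]
      have := nd_add_le (hx.1.sub (h.dom_memLp a ha)) (hy.1.sub (h.dom_memLp b hb))
      linarith
    have hnddiff : nd μ ((x - y) - (a - b)) < δ₂ := by
      have he : (x - y) - (a - b) = (x - a) + (-(y - b)) := by funext t; simp; ring
      rw [he]
      have h1 := nd_add_le (hx.1.sub (h.dom_memLp a ha))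
        ((hy.1.sub (h.dom_memLp b hb)).neg)
      rw [nd_neg] at h1
      linarith
    have h1 : Sval h (x + y) ≤ h.Q (a + b) + ε/6 := hlb1 (a + b) (h.add_mem a ha b hb) hndsum
    have h2 : Sval h (x - y) ≤ h.Q (a - b) + ε/6 := hlb2 (a - b) (h.sub_mem' ha hb) hnddiff
    have hpar := h.parallelogram ha hb
    linarith
  · apply real_le_of_forall_pos_le_add
    intro ε hε
    have hε6 : 0 < ε/6 := by positivity
    obtain ⟨δ₁, hδ₁, hlb1⟩ := S_lb h hx hε6
    obtain ⟨δ₂, hδ₂, hlb2⟩ := S_lb h hy hε6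
    have h0 : 0 < min δ₁ δ₂ := lt_min hδ₁ hδ₂
    set δ := min (min δ₁ δ₂ / 2) (ε/6) with hδdef
    have hδpos : 0 < δ := lt_min (by linarith) hε6
    obtain ⟨u, hu, hndu, hQu⟩ := S_recover h hxy hδpos
    obtain ⟨v, hv, hndv, hQv⟩ := S_recover h hxy' hδpos
    have hm1 : min δ₁ δ₂ ≤ δ₁ := min_le_left _ _
    have hm2 : min δ₁ δ₂ ≤ δ₂ := min_le_right _ _
    have hδle : δ ≤ min δ₁ δ₂ / 2 := min_le_left _ _
    have hδε : δ ≤ ε/6 := min_le_right _ _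
    have haddm : u + v ∈ h.dom := h.add_mem u hu v hv
    have hsubm : u - v ∈ h.dom := h.sub_mem' hu hv
    have hadom : (1/2 : ℝ) • (u + v) ∈ h.dom := h.smul_mem _ _ haddm
    have hbdom : (1/2 : ℝ) • (u - v) ∈ h.dom := h.smul_mem _ _ hsubm
    have hmemu : MemLp ((x + y) - u) 2 μ := hxy.1.sub (h.dom_memLp u hu)
    have hmemv : MemLp ((x - y) - v) 2 μ := hxy'.1.sub (h.dom_memLp v hv)
    have hnda : nd μ (x - (1/2 : ℝ) • (u + v)) < δ₁ := by
      have he : x - (1/2 : ℝ) • (u + v)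
          = (1/2 : ℝ) • (((x + y) - u) + ((x - y) - v)) := by
        funext t
        simp only [Pi.sub_apply, Pi.smul_apply, Pi.add_apply, smul_eq_mul]
        ring
      rw [he, nd_smul]
      have h1 := nd_add_le hmemu hmemv
      have habs : |(1/2 : ℝ)| = 1/2 := by norm_num
      rw [habs]
      linarith
    have hndb : nd μ (y - (1/2 : ℝ) • (u - v)) < δ₂ := by
      have he : y - (1/2 : ℝ) • (u - v)
          = (1/2 : ℝ) • (((x + y) - u) + (-((x - y) - v))) := by
        funext t
        simp only [Pi.sub_apply, Pi.smul_apply, Pi.add_apply, Pi.neg_apply, smul_eq_mul]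
        ring
      rw [he, nd_smul]
      have h1 := nd_add_le hmemu hmemv.neg
      rw [nd_neg] at h1
      have habs : |(1/2 : ℝ)| = 1/2 := by norm_num
      rw [habs]
      linarith
    have h1 : Sval h x ≤ h.Q ((1/2 : ℝ) • (u + v)) + ε/6 := hlb1 _ hadom hnda
    have h2 : Sval h y ≤ h.Q ((1/2 : ℝ) • (u - v)) + ε/6 := hlb2 _ hbdom hndb
    have e1 : h.Q ((1/2 : ℝ) • (u + v)) = (1/2 : ℝ)^2 * h.Q (u + v) := h.Q_smul' _ haddm
    have e2 : h.Q ((1/2 : ℝ) • (u - v)) = (1/2 : ℝ)^2 * h.Q (u - v) := h.Q_smul' _ hsubm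
    have e3 := h.parallelogram hu hv
    nlinarith [h1, h2, e1, e2, e3, hQu, hQv]

lemma Sval_P_add {u u' v : Y → ℝ} (hu : u ∈ SD h) (hu' : u' ∈ SD h) (hv : v ∈ SD h) :
    Sval h ((u + u') + v) - Sval h ((u + u') - v)
      = (Sval h (u + v) - Sval h (u - v)) + (Sval h (u' + v) - Sval h (u' - v)) := by
  set m : Y → ℝ := (1/2 : ℝ) • (u + u') with hm
  set w : Y → ℝ := (1/2 : ℝ) • (u - u') with hw
  have hmSD : m ∈ SD h := SD_smul h (SD_add h hu hu') _
  have hwSD : w ∈ SD h := SD_smul h (SD_sub h hu hu') _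
  have hmv : m + v ∈ SD h := SD_add h hmSD hv
  have hmv' : m - v ∈ SD h := SD_sub h hmSD hv
  have e1 := Sval_par h hmv hwSD
  have e1l : (m + v) + w = u + v := by
    funext t; simp only [hm, hw, Pi.add_apply, Pi.sub_apply, Pi.smul_apply, smul_eq_mul]; ring
  have e1r : (m + v) - w = u' + v := by
    funext t; simp only [hm, hw, Pi.add_apply, Pi.sub_apply, Pi.smul_apply, smul_eq_mul]; ring
  rw [e1l, e1r] at e1
  have e2 := Sval_par h hmv' hwSD
  have e2l : (m - v) + w = u - v := by
    funext t; simp only [hm, hw, Pi.add_apply, Pi.sub_apply, Pi.smul_apply, smul_eq_mul]; ring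
  have e2r : (m - v) - w = u' - v := by
    funext t; simp only [hm, hw, Pi.add_apply, Pi.sub_apply, Pi.smul_apply, smul_eq_mul]; ring
  rw [e2l, e2r] at e2
  have e3 := Sval_par h hmv hmSD
  have e3l : (m + v) + m = (u + u') + v := by
    funext t; simp only [hm, Pi.add_apply, Pi.smul_apply, smul_eq_mul]; ring
  have e3r : (m + v) - m = v := by
    funext t; simp only [hm, Pi.add_apply, Pi.sub_apply, Pi.smul_apply, smul_eq_mul]; ring
  rw [e3l, e3r] at e3
  have e4 := Sval_par h hmv' hmSD
  have e4l : (m - v) + m = (u + u') - v := by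
    funext t; simp only [hm, Pi.add_apply, Pi.sub_apply, Pi.smul_apply, smul_eq_mul]; ring
  have e4r : (m - v) - m = -v := by
    funext t; simp only [hm, Pi.add_apply, Pi.sub_apply, Pi.neg_apply, Pi.smul_apply, smul_eq_mul]; ring
  rw [e4l, e4r, Sval_neg h hv] at e4
  linarith

lemma Sval_add_le_sq {x y : Y → ℝ} (hx : x ∈ SD h) (hy : y ∈ SD h) :
    Sval h (x + y) ≤ (Real.sqrt (Sval h x) + Real.sqrt (Sval h y))^2 := by
  have hxy : x + y ∈ SD h := SD_add h hx hy
  have key : ∀ ε : ℝ, 0 < ε →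
      Sval h (x + y) ≤ (Real.sqrt (Sval h x + ε) + Real.sqrt (Sval h y + ε))^2 + ε := by
    intro ε hε
    obtain ⟨δ₀, hδ₀, hlb⟩ := S_lb h hxy hε
    have h0 : (0:ℝ) < min (δ₀/2) ε := lt_min (by linarith) hε
    obtain ⟨a, ha, hnda, hQa⟩ := S_recover h hx h0
    obtain ⟨b, hb, hndb, hQb⟩ := S_recover h hy h0
    have hmin1 : min (δ₀/2) ε ≤ δ₀/2 := min_le_left _ _
    have hmin2 : min (δ₀/2) ε ≤ ε := min_le_right _ _
    have hnd : nd μ ((x + y) - (a + b)) < δ₀ := by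
      have he : (x + y) - (a + b) = (x - a) + (y - b) := by funext t; simp; ring
      rw [he]
      have := nd_add_le (hx.1.sub (h.dom_memLp a ha)) (hy.1.sub (h.dom_memLp b hb))
      linarith
    have h1 : Sval h (x + y) ≤ h.Q (a + b) + ε := hlb _ (h.add_mem a ha b hb) hnd
    have h2 : h.Q (a + b) ≤ (Real.sqrt (h.Q a) + Real.sqrt (h.Q b))^2 := h.Q_add_le_sq ha hb
    have h3 : Real.sqrt (h.Q a) ≤ Real.sqrt (Sval h x + ε) := Real.sqrt_le_sqrt (by linarith)
    have h4 : Real.sqrt (h.Q b) ≤ Real.sqrt (Sval h y + ε) := Real.sqrt_le_sqrt (by linarith)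
    have h5 : (Real.sqrt (h.Q a) + Real.sqrt (h.Q b))^2
        ≤ (Real.sqrt (Sval h x + ε) + Real.sqrt (Sval h y + ε))^2 := by
      apply pow_le_pow_left₀ (by positivity) (add_le_add h3 h4)
    linarith
  have hlim : Tendsto (fun n : ℕ =>
      (Real.sqrt (Sval h x + 1/((n:ℝ)+1)) + Real.sqrt (Sval h y + 1/((n:ℝ)+1)))^2 + 1/((n:ℝ)+1))
      atTop (𝓝 ((Real.sqrt (Sval h x + 0) + Real.sqrt (Sval h y + 0))^2 + 0)) := by
    have hone := tendsto_one_div_add_atTop_nhds_zero_nat (𝕜 := ℝ)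
    exact (((((tendsto_const_nhds.add hone).sqrt).add
      ((tendsto_const_nhds.add hone).sqrt)).pow 2).add hone)
  have hle := ge_of_tendsto' hlim (fun n => key _ (by positivity))
  simpa using hle

lemma sqrt_Sval_sub_sq_le {x y : Y → ℝ} (hx : x ∈ SD h) (hy : y ∈ SD h) :
    (Real.sqrt (Sval h x) - Real.sqrt (Sval h y))^2 ≤ Sval h (x - y) := by
  have hxy : x - y ∈ SD h := SD_sub h hx hy
  have hyx : y - x ∈ SD h := SD_sub h hy hx
  have hswap : Sval h (y - x) = Sval h (x - y) := by
    rw [show y - x = -(x - y) from (neg_sub x y).symm, Sval_neg h hxy]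
  have h1 : Real.sqrt (Sval h x) ≤ Real.sqrt (Sval h (x - y)) + Real.sqrt (Sval h y) := by
    have he : (x - y) + y = x := by funext t; simp
    have h2 := Sval_add_le_sq h hxy hy
    rw [he] at h2
    calc Real.sqrt (Sval h x)
        ≤ Real.sqrt ((Real.sqrt (Sval h (x - y)) + Real.sqrt (Sval h y))^2) :=
          Real.sqrt_le_sqrt h2
      _ = _ := Real.sqrt_sq (by positivity)
  have h2 : Real.sqrt (Sval h y) ≤ Real.sqrt (Sval h (x - y)) + Real.sqrt (Sval h x) := by
    have he : (y - x) + x = y := by funext t; simp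
    have h3 := Sval_add_le_sq h hyx hx
    rw [he, hswap] at h3
    calc Real.sqrt (Sval h y)
        ≤ Real.sqrt ((Real.sqrt (Sval h (x - y)) + Real.sqrt (Sval h x))^2) :=
          Real.sqrt_le_sqrt h3
      _ = _ := Real.sqrt_sq (by positivity)
  have hc := Real.sq_sqrt (Sval_nonneg h (x - y))
  nlinarith [h1, h2, hc, Real.sqrt_nonneg (Sval h (x - y))]

lemma Sval_diff_bound {x y : Y → ℝ} (hx : x ∈ SD h) (hy : y ∈ SD h) :
    |Sval h (x + y) - Sval h (x - y)|
      ≤ 4 * Real.sqrt (Sval h x) * Real.sqrt (Sval h y) := by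
  have hny := SD_neg h hy
  have h1 := Sval_add_le_sq h hx hy
  have h2 := sqrt_Sval_sub_sq_le h hx hy
  have h3 := Sval_add_le_sq h hx hny
  have h4 := sqrt_Sval_sub_sq_le h hx hny
  rw [show x + -y = x - y from (sub_eq_add_neg x y).symm, Sval_neg h hy] at h3
  rw [show x - -y = x + y from by funext t; simp, Sval_neg h hy] at h4
  have hsx := Real.sq_sqrt (Sval_nonneg h x)
  have hsy := Real.sq_sqrt (Sval_nonneg h y)
  rw [abs_le]
  constructor <;> nlinarith [Real.sqrt_nonneg (Sval h x), Real.sqrt_nonneg (Sval h y)]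

lemma additive_bounded_linear (φ : ℝ → ℝ) (hadd : ∀ a b : ℝ, φ (a + b) = φ a + φ b)
    (M : ℝ) (hM : ∀ c : ℝ, |φ c| ≤ M * |c|) : ∀ c : ℝ, φ c = c * φ 1 := by
  have hM0 : 0 ≤ M := by
    have h1 := hM 1
    have h2 := abs_nonneg (φ 1)
    simp only [abs_one, mul_one] at h1
    linarith
  have hsub : ∀ a b : ℝ, φ (a - b) = φ a - φ b := by
    intro a b
    have := hadd (a - b) b
    rw [sub_add_cancel] at this
    linarith
  have hψ : Continuous (AddMonoidHom.mk' φ hadd) := by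
    apply (LipschitzWith.of_dist_le_mul (K := ⟨M, hM0⟩) ?_).continuous
    intro a b
    have h1 : dist ((AddMonoidHom.mk' φ hadd) a) ((AddMonoidHom.mk' φ hadd) b)
        = |φ (a - b)| := by
      rw [Real.dist_eq]
      show |φ a - φ b| = _
      rw [hsub]
    rw [h1, Real.dist_eq]
    exact le_trans (hM _) (le_of_eq rfl)
  intro c
  have h3 := map_smul ((AddMonoidHom.mk' φ hadd).toRealLinearMap hψ) c (1:ℝ)
  have h4 : ⇑((AddMonoidHom.mk' φ hadd).toRealLinearMap hψ) = φ := by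
    rw [AddMonoidHom.coe_toRealLinearMap]
    rfl
  rw [h4] at h3
  simpa using h3

open Classical in
/-- Modified relaxed value, defined to vanish off the relaxed domain. -/
def Sval' (h : QuadForm Y μ) (f : Y → ℝ) : ℝ := if f ∈ SD h then Sval h f else 0

lemma Sval'_eq {f : Y → ℝ} (hf : f ∈ SD h) : Sval' h f = Sval h f := if_pos hf

lemma Sval'_neg (f : Y → ℝ) : Sval' h (-f) = Sval' h f := by
  unfold Sval'
  by_cases hf : f ∈ SD h
  · rw [if_pos (SD_neg h hf), if_pos hf, Sval_neg h hf]
  · rw [if_neg fun hc => hf (by simpa using SD_neg h hc), if_neg hf]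

lemma Sval'_congr {f g : Y → ℝ} (hfg : f =ᵐ[μ] g) : Sval' h f = Sval' h g := by
  unfold Sval'
  by_cases hf : f ∈ SD h
  · rw [if_pos hf, if_pos (SD_congr' h hf hfg), Sval_congr' h hfg]
  · rw [if_neg hf, if_neg fun hg => hf (SD_congr' h hg hfg.symm)]

/-- The relaxation of `h`, constructed as the lower semicontinuous envelope. -/
def relaxForm (h : QuadForm Y μ) : QuadForm Y μ where
  dom := SD h
  B f g := (Sval' h (f + g) - Sval' h (f - g)) / 4
  dom_memLp f hf := hf.1
  dom_congr f hf g hfg := SD_congr' h hf hfg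
  B_congr f g f' g' hff' hgg' := by
    have e1 : (f + g : Y → ℝ) =ᵐ[μ] (f' + g') := hff'.add hgg'
    have e2 : (f - g : Y → ℝ) =ᵐ[μ] (f' - g') := hff'.sub hgg'
    rw [Sval'_congr h e1, Sval'_congr h e2]
  zero_mem := SD_zero h
  add_mem f hf g hg := SD_add h hf hg
  smul_mem c f hf := SD_smul h hf c
  symm f g := by
    rw [add_comm, show f - g = -(g - f) from (neg_sub g f).symm, Sval'_neg]
  add_left f hf g hg k hk := by
    have key := Sval_P_add h hf hg hk
    rw [Sval'_eq h (SD_add h (SD_add h hf hg) hk), Sval'_eq h (SD_sub h (SD_add h hf hg) hk),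
      Sval'_eq h (SD_add h hf hk), Sval'_eq h (SD_sub h hf hk),
      Sval'_eq h (SD_add h hg hk), Sval'_eq h (SD_sub h hg hk)]
    linarith
  smul_left c f hf g hg := by
    show (Sval' h (c • f + g) - Sval' h (c • f - g)) / 4
      = c * ((Sval' h (f + g) - Sval' h (f - g)) / 4)
    have hadd : ∀ a b : ℝ,
        (fun t : ℝ => (Sval' h (t • f + g) - Sval' h (t • f - g)) / 4) (a + b)
          = (fun t : ℝ => (Sval' h (t • f + g) - Sval' h (t • f - g)) / 4) a
            + (fun t : ℝ => (Sval' h (t • f + g) - Sval' h (t • f - g)) / 4) b := by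
      intro a b
      dsimp only
      have key := Sval_P_add h (SD_smul h hf a) (SD_smul h hf b) hg
      have he : (a + b) • f = a • f + b • f := add_smul a b f
      rw [he]
      rw [Sval'_eq h (SD_add h (SD_add h (SD_smul h hf a) (SD_smul h hf b)) hg),
        Sval'_eq h (SD_sub h (SD_add h (SD_smul h hf a) (SD_smul h hf b)) hg),
        Sval'_eq h (SD_add h (SD_smul h hf a) hg), Sval'_eq h (SD_sub h (SD_smul h hf a) hg),
        Sval'_eq h (SD_add h (SD_smul h hf b) hg), Sval'_eq h (SD_sub h (SD_smul h hf b) hg)]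
      linarith
    have hbound : ∀ t : ℝ,
        |(fun t : ℝ => (Sval' h (t • f + g) - Sval' h (t • f - g)) / 4) t|
          ≤ (Real.sqrt (Sval h f) * Real.sqrt (Sval h g)) * |t| := by
      intro t
      dsimp only
      have h1 := Sval_diff_bound h (SD_smul h hf t) hg
      have h2 : Real.sqrt (Sval h (t • f)) = |t| * Real.sqrt (Sval h f) := by
        rw [Sval_smul h hf t, show t^2 = |t|^2 from (sq_abs t).symm,
          Real.sqrt_mul (by positivity), Real.sqrt_sq (abs_nonneg t)]
      rw [h2] at h1
      rw [Sval'_eq h (SD_add h (SD_smul h hf t) hg), Sval'_eq h (SD_sub h (SD_smul h hf t) hg),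
        abs_div, show |(4:ℝ)| = 4 by norm_num]
      rw [div_le_iff₀ (by norm_num : (0:ℝ) < 4)]
      calc |Sval h (t • f + g) - Sval h (t • f - g)|
          ≤ 4 * (|t| * Real.sqrt (Sval h f)) * Real.sqrt (Sval h g) := h1
        _ = Real.sqrt (Sval h f) * Real.sqrt (Sval h g) * |t| * 4 := by ring
    have hlin := additive_bounded_linear _ hadd _ hbound c
    rw [hlin, one_smul]
  nonneg f hf := by
    show 0 ≤ (Sval' h (f + f) - Sval' h (f - f)) / 4
    have e1 : f + f = (2:ℝ) • f := by funext t; simp [Pi.smul_apply]; ring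
    have e2 : f - f = (0 : Y → ℝ) := sub_self f
    rw [e1, e2, Sval'_eq h (SD_smul h hf 2), Sval'_eq h (SD_zero h), Sval_zero h,
      Sval_smul h hf 2]
    have := Sval_nonneg h f
    linarith
  dense_dom f hf ε hε := by
    obtain ⟨g, hg, hlt⟩ := h.dense_dom f hf ε hε
    exact ⟨g, dom_subset_SD h hg, hlt⟩

lemma relaxQ_eq {f : Y → ℝ} (hf : f ∈ SD h) : (relaxForm h).Q f = Sval h f := by
  show (Sval' h (f + f) - Sval' h (f - f)) / 4 = Sval h f
  have e1 : f + f = (2:ℝ) • f := by funext t; simp [Pi.smul_apply]; ring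
  have e2 : f - f = (0 : Y → ℝ) := sub_self f
  rw [e1, e2, Sval'_eq h (SD_smul h hf 2), Sval'_eq h (SD_zero h), Sval_zero h,
    Sval_smul h hf 2]
  ring

lemma S_lsc {w : Y → ℝ} {u : ℕ → Y → ℝ} {c : ℝ} (hu : ∀ n, u n ∈ SD h)
    (hw : MemLp w 2 μ)
    (hL2 : Tendsto (fun n => eLpNorm (u n - w) 2 μ) atTop (𝓝 0))
    (hc : ∀ n, Sval h (u n) ≤ c) : w ∈ SD h ∧ Sval h w ≤ c := by
  have hcS : c ∈ Sset h w := by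
    intro δ hδ
    have hnd : Tendsto (fun n => nd μ (u n - w)) atTop (𝓝 0) := tendsto_nd_of_eLpNorm hL2
    obtain ⟨n, hn⟩ := (hnd.eventually_lt_const (show (0:ℝ) < δ/2 by positivity)).exists
    obtain ⟨a, ha, hnda, hQa⟩ := S_recover h (hu n) (half_pos hδ)
    refine ⟨a, ha, ?_, by linarith [hc n]⟩
    have he : w - a = (w - u n) + (u n - a) := by funext t; simp
    have htri := nd_add_le (hw.sub ((hu n).1)) ((hu n).1.sub (h.dom_memLp a ha))
    have hcomm : nd μ (w - u n) = nd μ (u n - w) := nd_sub_comm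
    rw [he]
    calc nd μ ((w - u n) + (u n - a)) ≤ nd μ (w - u n) + nd μ (u n - a) := htri
      _ < δ := by rw [hcomm]; linarith
  exact ⟨mem_SD h hw hcS, Sval_le h hcS⟩

lemma relax_closed : Closed (relaxForm h) := by
  intro u g hu hg hL2 hC
  have hQS : ∀ m n : ℕ, (relaxForm h).Q (u m - u n) = Sval h (u m - u n) := fun m n =>
    relaxQ_eq h (SD_sub h (hu m) (hu n))
  have hgdom : g ∈ SD h := by
    obtain ⟨N, hN⟩ := hC 1 one_pos
    have h1 : ∀ m : ℕ, Sval h (u (m + N) - u N) ≤ 1 := by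
      intro m
      rw [← hQS]
      exact le_of_lt (hN (m + N) (Nat.le_add_left N m) N le_rfl)
    have h2 : Tendsto (fun m => eLpNorm ((u (m + N) - u N) - (g - u N)) 2 μ) atTop (𝓝 0) := by
      have he : ∀ m : ℕ, (u (m + N) - u N) - (g - u N) = u (m + N) - g := by
        intro m; funext t; simp
      simp only [he]
      exact hL2.comp (tendsto_add_atTop_nat N)
    have h3 := S_lsc h (fun m => SD_sub h (hu (m + N)) (hu N)) (hg.sub ((hu N).1)) h2 h1
    have he : g = (g - u N) + u N := by funext t; simp
    rw [he]
    exact SD_add h h3.1 (hu N)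
  refine ⟨hgdom, ?_⟩
  rw [Metric.tendsto_atTop]
  intro ε hε
  obtain ⟨N, hN⟩ := hC (ε/2) (by positivity)
  refine ⟨N, fun n hn => ?_⟩
  have h1 : ∀ m : ℕ, Sval h (u (m + N) - u n) ≤ ε/2 := by
    intro m
    rw [← hQS]
    exact le_of_lt (hN (m + N) (Nat.le_add_left N m) n hn)
  have h2 : Tendsto (fun m => eLpNorm ((u (m + N) - u n) - (g - u n)) 2 μ) atTop (𝓝 0) := by
    have he : ∀ m : ℕ, (u (m + N) - u n) - (g - u n) = u (m + N) - g := by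
      intro m; funext t; simp
    simp only [he]
    exact hL2.comp (tendsto_add_atTop_nat N)
  have h3 := S_lsc h (fun m => SD_sub h (hu (m + N)) (hu n)) (hg.sub ((hu n).1)) h2 h1
  have h4 : (relaxForm h).Q (u n - g) = Sval h (u n - g) := relaxQ_eq h (SD_sub h (hu n) hgdom)
  have h5 : Sval h (u n - g) = Sval h (g - u n) := by
    rw [show u n - g = -(g - u n) from (neg_sub g (u n)).symm, Sval_neg h (SD_sub h hgdom (hu n))]
  have hnn : 0 ≤ (relaxForm h).Q (u n - g) :=
    (relaxForm h).Q_nonneg' ((relaxForm h).sub_mem' (hu n) hgdom)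
  rw [Real.dist_eq, sub_zero, abs_of_nonneg hnn, h4, h5]
  linarith [h3.2]

lemma relax_le : FormLE (relaxForm h) h :=
  ⟨dom_subset_SD h, fun f hf => by
    rw [relaxQ_eq h (dom_subset_SD h hf)]
    exact Sval_le_Q h hf⟩

end Relax
section Aux2

variable {Y : Type*} [MeasurableSpace Y] {μ : Measure Y}

lemma formNormSq_eq (E : QuadForm Y μ) (f : Y → ℝ) :
    E.formNormSq f = E.Q f + nd μ f ^ 2 := rfl

lemma Q_le_formNormSq (E : QuadForm Y μ) (f : Y → ℝ) : E.Q f ≤ E.formNormSq f := by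
  rw [formNormSq_eq]
  nlinarith [sq_nonneg (nd μ f)]

lemma ndsq_le_formNormSq (E : QuadForm Y μ) {f : Y → ℝ} (hf : f ∈ E.dom) :
    nd μ f ^ 2 ≤ E.formNormSq f := by
  rw [formNormSq_eq]
  linarith [E.Q_nonneg' hf]

lemma formNormSq_add_le (E : QuadForm Y μ) {u v : Y → ℝ} (hu : u ∈ E.dom) (hv : v ∈ E.dom) :
    E.formNormSq (u + v) ≤ 2 * E.formNormSq u + 2 * E.formNormSq v := by
  rw [formNormSq_eq, formNormSq_eq, formNormSq_eq]
  have h1 := E.Q_add_le hu hv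
  have h2 := nd_add_le (E.dom_memLp u hu) (E.dom_memLp v hv)
  have h3 : nd μ (u + v) ^ 2 ≤ (nd μ u + nd μ v) ^ 2 := by
    apply pow_le_pow_left₀ nd_nonneg h2
  nlinarith [sq_nonneg (nd μ u - nd μ v)]

lemma Q_tendsto_of (E : QuadForm Y μ) {u : ℕ → Y → ℝ} {f : Y → ℝ}
    (hu : ∀ n, u n ∈ E.dom) (hf : f ∈ E.dom)
    (h : Tendsto (fun n => E.Q (u n - f)) atTop (𝓝 0)) :
    Tendsto (fun n => E.Q (u n)) atTop (𝓝 (E.Q f)) := by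
  have key : ∀ n, |E.Q (u n) - E.Q f|
      ≤ 2 * Real.sqrt (E.Q f) * Real.sqrt (E.Q (u n - f)) + E.Q (u n - f) := by
    intro n
    have hsub : u n - f ∈ E.dom := E.sub_mem' (hu n) hf
    have hexp : E.Q (u n) = E.Q f + 2 * E.B f (u n - f) + E.Q (u n - f) := by
      have he : u n = f + (u n - f) := by funext t; simp
      calc E.Q (u n) = E.Q (f + (u n - f)) := by rw [← he]
        _ = _ := E.Q_add' hf hsub
    have hB := E.abs_B_le hf hsub
    have h0 := E.Q_nonneg' hsub
    have h1 : |E.Q (u n) - E.Q f| = |2 * E.B f (u n - f) + E.Q (u n - f)| := by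
      rw [hexp]; ring_nf
    rw [h1]
    calc |2 * E.B f (u n - f) + E.Q (u n - f)|
        ≤ |2 * E.B f (u n - f)| + |E.Q (u n - f)| := abs_add_le _ _
      _ = 2 * |E.B f (u n - f)| + E.Q (u n - f) := by
          rw [abs_mul, abs_of_nonneg h0]; norm_num
      _ ≤ 2 * (Real.sqrt (E.Q f) * Real.sqrt (E.Q (u n - f))) + E.Q (u n - f) := by
          linarith [hB]
      _ = 2 * Real.sqrt (E.Q f) * Real.sqrt (E.Q (u n - f)) + E.Q (u n - f) := by ring
  have h2 : Tendsto (fun n => 2 * Real.sqrt (E.Q f) * Real.sqrt (E.Q (u n - f))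
      + E.Q (u n - f)) atTop (𝓝 (2 * Real.sqrt (E.Q f) * Real.sqrt 0 + 0)) :=
    (h.sqrt.const_mul _).add h
  have h2' : Tendsto (fun n => 2 * Real.sqrt (E.Q f) * Real.sqrt (E.Q (u n - f))
      + E.Q (u n - f)) atTop (𝓝 0) := by simpa using h2
  have h3 : Tendsto (fun n => E.Q (u n) - E.Q f) atTop (𝓝 0) :=
    squeeze_zero_norm key h2'
  have h4 := h3.add_const (E.Q f)
  simpa using h4

lemma bdd_of_cont_compactSupport {Z : Type*} [TopologicalSpace Z] {f : Z → ℝ}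
    (hc : Continuous f) (hs : HasCompactSupport f) : ∃ C : ℝ, ∀ x, |f x| ≤ C := by
  obtain ⟨C, hC⟩ := hs.exists_bound_of_continuous hc
  exact ⟨C, fun x => by simpa [Real.norm_eq_abs] using hC x⟩

end Aux2

variable {X : Type*} [MetricSpace X] [MeasurableSpace X] [BorelSpace X]
  [ConnectedSpace X] [LocallyCompactSpace X] [TopologicalSpace.SeparableSpace X]

/-- Lemma 3.7: if `h ∈ C_l` then the relaxation `h₀` of `h` is a regular Dirichlet form
with `D(l) ⊆ D(h₀)`, and every core for the form `l` is a core for `h₀`. -/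
theorem relaxation_regular_dirichlet
    (μ : Measure X) [μ.Regular] [μ.IsOpenPosMeasure]
    (l : QuadForm X μ) (hl : IsDiffusion l)
    (h h₀ : QuadForm X μ) (hCl : MemCl l h) (hrel : IsRelaxation h h₀) :
    Closed h₀ ∧ Markovian h₀ ∧ Regular h₀ ∧ l.dom ⊆ h₀.dom ∧
      ∀ C : Set (X → ℝ), IsCore l C → IsCore h₀ C := by
  classical
  obtain ⟨hlC, hlM, hlR, hlLoc⟩ := hl
  obtain ⟨hA_h, ⟨lam, hlam0, hlam⟩, hdense, hSL, hMark⟩ := hCl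
  obtain ⟨h₀C, ⟨hdom01, hQ01⟩, hmax⟩ := hrel
  obtain ⟨hdom0k, hQk0⟩ := hmax (relaxForm h) (relax_closed h) (relax_le h)
  obtain ⟨C₀, hC₀cc, hC₀core, hC₀unif⟩ := hlR
  have hC₀A : C₀ ⊆ l.Adom := fun f hf =>
    ⟨hC₀core.1 hf, by
      obtain ⟨C, hC⟩ := bdd_of_cont_compactSupport (hC₀cc f hf).1 (hC₀cc f hf).2
      exact ⟨C, ae_of_all μ hC⟩⟩
  have hAdom0 : l.Adom ⊆ h₀.dom := fun f hf => hdom01 (hA_h hf)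
  have hAsub : ∀ f ∈ l.Adom, ∀ g ∈ l.Adom, f - g ∈ l.Adom := by
    rintro f ⟨hf1, Cf, hCf⟩ g ⟨hg1, Cg, hCg⟩
    refine ⟨l.sub_mem' hf1 hg1, Cf + Cg, ?_⟩
    filter_upwards [hCf, hCg] with x h1 h2
    calc |(f - g) x| = |f x - g x| := rfl
      _ ≤ |f x| + |g x| := abs_sub _ _
      _ ≤ Cf + Cg := add_le_add h1 h2
  -- Step 1: `D(l) ⊆ D(h₀)` together with the bound `h₀ ≤ lam · l` on `D(l)`.
  have main_l : ∀ f ∈ l.dom, f ∈ h₀.dom ∧ h₀.Q f ≤ lam * l.Q f := by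
    intro f hf
    have hfmem : MemLp f 2 μ := l.dom_memLp f hf
    choose c hc1 hc2 using fun n : ℕ => hC₀core.2 f hf (1/((n:ℝ)+1)) (by positivity)
    have hcA : ∀ n, c n ∈ l.Adom := fun n => hC₀A (hc1 n)
    have hcl : ∀ n, c n ∈ l.dom := fun n => (hcA n).1
    have hch : ∀ n, c n ∈ h.dom := fun n => hA_h (hcA n)
    have hch₀ : ∀ n, c n ∈ h₀.dom := fun n => hdom01 (hch n)
    have hsubl : ∀ n, f - c n ∈ l.dom := fun n => l.sub_mem' hf (hcl n)
    have hlQ : ∀ n, l.Q (f - c n) < 1/((n:ℝ)+1) := fun n =>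
      lt_of_le_of_lt (Q_le_formNormSq l _) (hc2 n)
    have hndb : ∀ n, nd μ (c n - f) ≤ Real.sqrt (1/((n:ℝ)+1)) := by
      intro n
      have h1 : nd μ (f - c n) ^ 2 ≤ l.formNormSq (f - c n) := ndsq_le_formNormSq l (hsubl n)
      have h2 : nd μ (c n - f) = nd μ (f - c n) := nd_sub_comm
      rw [h2]
      exact Real.le_sqrt_of_sq_le (le_trans h1 (hc2 n).le)
    have hndc : Tendsto (fun n => nd μ (c n - f)) atTop (𝓝 0) := by
      apply squeeze_zero (fun n => nd_nonneg) hndb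
      have := tendsto_one_div_add_atTop_nhds_zero_nat.sqrt
      simpa using this
    have heLc : Tendsto (fun n => eLpNorm (c n - f) 2 μ) atTop (𝓝 0) :=
      tendsto_eLpNorm_of_nd (fun n => (l.dom_memLp _ (hcl n)).sub hfmem) hndc
    have hCauchy : ∀ ε : ℝ, 0 < ε → ∃ N, ∀ m ≥ N, ∀ n ≥ N, h₀.Q (c m - c n) < ε := by
      intro ε hε
      obtain ⟨N, hN⟩ := exists_nat_one_div_lt (show (0:ℝ) < ε/(4*lam) by positivity)
      refine ⟨N, fun m hm n hn => ?_⟩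
      have hsubA : c m - c n ∈ l.Adom := hAsub _ (hcA m) _ (hcA n)
      have h1 : h₀.Q (c m - c n) ≤ h.Q (c m - c n) := hQ01 _ (hA_h hsubA)
      have h2 : h.Q (c m - c n) ≤ lam * l.Q (c m - c n) := hlam _ hsubA
      have he : c m - c n = (c m - f) + (f - c n) := by funext t; simp
      have h3 : l.Q (c m - c n) ≤ 2 * l.Q (c m - f) + 2 * l.Q (f - c n) := by
        rw [he]
        exact l.Q_add_le (l.sub_mem' (hcl m) hf) (hsubl n)
      have h4 : l.Q (c m - f) = l.Q (f - c m) := l.Q_sub_comm (hcl m) hf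
      have hm' : 1/((m:ℝ)+1) ≤ 1/((N:ℝ)+1) := by
        apply one_div_le_one_div_of_le (by positivity)
        have : (N:ℝ) ≤ (m:ℝ) := by exact_mod_cast hm
        linarith
      have hn' : 1/((n:ℝ)+1) ≤ 1/((N:ℝ)+1) := by
        apply one_div_le_one_div_of_le (by positivity)
        have : (N:ℝ) ≤ (n:ℝ) := by exact_mod_cast hn
        linarith
      have h5 := hlQ m
      have h6 := hlQ n
      calc h₀.Q (c m - c n) ≤ lam * l.Q (c m - c n) := le_trans h1 h2
        _ ≤ lam * (2 * l.Q (c m - f) + 2 * l.Q (f - c n)) := by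
            apply mul_le_mul_of_nonneg_left h3 hlam0.le
        _ < ε := by
            rw [h4]
            have hq1 : l.Q (f - c m) < 1/((N:ℝ)+1) := lt_of_lt_of_le h5 hm'
            have hq2 : l.Q (f - c n) < 1/((N:ℝ)+1) := lt_of_lt_of_le h6 hn'
            have h7 : lam * (2 * l.Q (f - c m) + 2 * l.Q (f - c n))
                < lam * (4 * (1/((N:ℝ)+1))) :=
              mul_lt_mul_of_pos_left (by linarith) hlam0
            have h8 : lam * (4 * (1/((N:ℝ)+1))) < lam * (4 * (ε/(4*lam))) :=
              mul_lt_mul_of_pos_left (by linarith) hlam0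
            have h9 : lam * (4 * (ε/(4*lam))) = ε := by field_simp <;> ring
            linarith
    obtain ⟨hf₀, hQc⟩ := h₀C c f hch₀ hfmem heLc hCauchy
    refine ⟨hf₀, ?_⟩
    have hQl0 : Tendsto (fun n => l.Q (c n - f)) atTop (𝓝 0) := by
      apply squeeze_zero (fun n => l.Q_nonneg' (l.sub_mem' (hcl n) hf))
        (fun n => (le_of_lt (by rw [l.Q_sub_comm (hcl n) hf]; exact hlQ n)))
      exact tendsto_one_div_add_atTop_nhds_zero_nat
    have hQl : Tendsto (fun n => l.Q (c n)) atTop (𝓝 (l.Q f)) := Q_tendsto_of l hcl hf hQl0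
    have hQh₀ : Tendsto (fun n => h₀.Q (c n)) atTop (𝓝 (h₀.Q f)) := Q_tendsto_of h₀ hch₀ hf₀ hQc
    have hle : ∀ n, h₀.Q (c n) ≤ lam * l.Q (c n) := fun n =>
      le_trans (hQ01 _ (hch n)) (hlam _ (hcA n))
    exact le_of_tendsto_of_tendsto' hQh₀ (hQl.const_mul lam) hle
  -- Step ★ : approximation of elements of `D(h₀)` from the algebra, with energy control.
  have star : ∀ f ∈ h₀.dom, ∀ ε : ℝ, 0 < ε →
      ∃ g ∈ l.Adom, h₀.formNormSq (f - g) < ε ∧ h.Q g < h₀.Q f + ε := by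
    intro f hf ε hε
    have hfmem : MemLp f 2 μ := h₀.dom_memLp f hf
    have hfk : f ∈ SD h := hdom0k hf
    have hSle : Sval h f ≤ h₀.Q f := by
      have := hQk0 f hf
      rwa [relaxQ_eq h hfk] at this
    choose a haDom hand haQ using fun n : ℕ => S_recover h hfk
      (show (0:ℝ) < 1/((n:ℝ)+1) by positivity)
    have ha₀ : ∀ n, a n ∈ h₀.dom := fun n => hdom01 (haDom n)
    have haQh : ∀ n, h.Q (a n) < h₀.Q f + 1/((n:ℝ)+1) := fun n =>
      lt_of_lt_of_le (haQ n) (by linarith)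
    have haQ' : ∀ n, h₀.Q (a n) ≤ h₀.Q f + 1/((n:ℝ)+1) := fun n =>
      le_trans (hQ01 _ (haDom n)) (haQh n).le
    set m : ℕ → X → ℝ := fun n => (1/2 : ℝ) • (f + a n) with hm_def
    have hm₀ : ∀ n, m n ∈ h₀.dom := fun n => h₀.smul_mem _ _ (h₀.add_mem f hf _ (ha₀ n))
    have hmdiff : ∀ n, m n - f = (1/2 : ℝ) • (a n - f) := by
      intro n; funext t
      simp only [hm_def, Pi.sub_apply, Pi.smul_apply, Pi.add_apply, smul_eq_mul]
      ring
    have hndm : Tendsto (fun n => nd μ (m n - f)) atTop (𝓝 0) := by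
      have hb : ∀ n, nd μ (m n - f) ≤ 1/((n:ℝ)+1) := by
        intro n
        rw [hmdiff n, nd_smul]
        have h1 : nd μ (a n - f) = nd μ (f - a n) := nd_sub_comm
        rw [h1]
        have h2 := (hand n).le
        have h3 : |(1/2 : ℝ)| = 1/2 := by norm_num
        rw [h3]
        nlinarith [nd_nonneg (μ := μ) (f := f - a n)]
      apply squeeze_zero (fun n => nd_nonneg) hb
      exact tendsto_one_div_add_atTop_nhds_zero_nat
    have hmL2 : Tendsto (fun n => eLpNorm (m n - f) 2 μ) atTop (𝓝 0) :=
      tendsto_eLpNorm_of_nd (fun n => (h₀.dom_memLp _ (hm₀ n)).sub hfmem) hndm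
    have hQml : ∀ δ : ℝ, 0 < δ → ∀ᶠ n in atTop, h₀.Q f - δ < h₀.Q (m n) := by
      intro δ hδ
      by_contra hcon
      rw [Filter.not_eventually] at hcon
      have hcon' : ∃ᶠ n in atTop, h₀.Q (m n) ≤ h₀.Q f - δ :=
        hcon.mono fun n hn => not_lt.mp hn
      obtain ⟨φ, hφmono, hφ⟩ := Filter.extraction_of_frequently_atTop hcon'
      have hsubL2 : Tendsto (fun i => eLpNorm (m (φ i) - f) 2 μ) atTop (𝓝 0) :=
        hmL2.comp hφmono.tendsto_atTop
      have := closed_lsc h₀C (fun i => hm₀ (φ i)) hfmem hsubL2 (fun i => hφ i)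
      linarith [this.2]
    have htendaQ : Tendsto (fun n => h₀.Q (f - a n)) atTop (𝓝 0) := by
      have hiden : ∀ n, h₀.Q (f - a n)
          = 2 * h₀.Q f + 2 * h₀.Q (a n) - 4 * h₀.Q (m n) := by
        intro n
        have hpar := h₀.parallelogram hf (ha₀ n)
        have hq : h₀.Q (m n) = (1/2 : ℝ)^2 * h₀.Q (f + a n) :=
          h₀.Q_smul' _ (h₀.add_mem f hf _ (ha₀ n))
        nlinarith [hpar, hq]
      rw [Metric.tendsto_atTop]
      intro ε' hε'
      obtain ⟨N1, hN1⟩ := (eventually_atTop.mp (hQml (ε'/8) (by positivity)))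
      obtain ⟨N2, hN2⟩ := exists_nat_one_div_lt (show (0:ℝ) < ε'/4 by positivity)
      refine ⟨max N1 N2, fun n hn => ?_⟩
      have h1 := hN1 n (le_trans (le_max_left _ _) hn)
      have h2 : 1/((n:ℝ)+1) ≤ 1/((N2:ℝ)+1) := by
        apply one_div_le_one_div_of_le (by positivity)
        have : (N2:ℝ) ≤ (n:ℝ) := by exact_mod_cast le_trans (le_max_right _ _) hn
        linarith
      have h3 := haQ' n
      have h4 := hiden n
      have hnn : 0 ≤ h₀.Q (f - a n) := h₀.Q_nonneg' (h₀.sub_mem' hf (ha₀ n))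
      rw [Real.dist_eq, sub_zero, abs_of_nonneg hnn]
      nlinarith
    -- choose a good index
    have hεm : (0:ℝ) < min 1 (ε/8) := lt_min one_pos (by positivity)
    obtain ⟨N2, hN2⟩ := exists_nat_one_div_lt hεm
    obtain ⟨N1, hN1⟩ := eventually_atTop.mp
      ((htendaQ.eventually_lt_const (show (0:ℝ) < ε/8 by positivity)).mono fun n hn => hn)
    set n₀ := max N1 N2 with hn₀
    have hinv : 1/((n₀:ℝ)+1) < min 1 (ε/8) := by
      have h2 : 1/((n₀:ℝ)+1) ≤ 1/((N2:ℝ)+1) := by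
        apply one_div_le_one_div_of_le (by positivity)
        have : (N2:ℝ) ≤ (n₀:ℝ) := by exact_mod_cast le_max_right N1 N2
        linarith
      linarith
    have hQfa : h₀.Q (f - a n₀) < ε/8 := hN1 n₀ (le_max_left _ _)
    have hndfa : nd μ (f - a n₀) ^ 2 < ε/8 := by
      have h1 := hand n₀
      have h2 : nd μ (f - a n₀) < min 1 (ε/8) := lt_trans h1 hinv
      have h3 := nd_nonneg (μ := μ) (f := f - a n₀)
      have h4 : min 1 (ε/8) ≤ 1 := min_le_left _ _
      have h5 : min 1 (ε/8) ≤ ε/8 := min_le_right _ _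
      nlinarith
    have hQa8 : h.Q (a n₀) < h₀.Q f + ε/8 := by
      have := haQh n₀
      have h5 : min 1 (ε/8) ≤ ε/8 := min_le_right _ _
      linarith
    -- approximate `a n₀` within the algebra
    choose gj hgjA hgj using fun j : ℕ => hdense (a n₀) (haDom n₀) (1/((j:ℝ)+1)) (by positivity)
    have hgjh : ∀ j, gj j ∈ h.dom := fun j => hA_h (hgjA j)
    have hQgj0 : Tendsto (fun j => h.Q (gj j - a n₀)) atTop (𝓝 0) := by
      have hb : ∀ j : ℕ, h.Q (gj j - a n₀) ≤ 1/((j:ℝ)+1) := by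
        intro j
        have h1 : h.Q (gj j - a n₀) = h.Q (a n₀ - gj j) := h.Q_sub_comm (hgjh j) (haDom n₀)
        rw [h1]
        exact le_trans (Q_le_formNormSq h _) (hgj j).le
      exact squeeze_zero (fun j => h.Q_nonneg' (h.sub_mem' (hgjh j) (haDom n₀))) hb
        tendsto_one_div_add_atTop_nhds_zero_nat
    have hQgj : Tendsto (fun j => h.Q (gj j)) atTop (𝓝 (h.Q (a n₀))) :=
      Q_tendsto_of h hgjh (haDom n₀) hQgj0
    have hev1 : ∀ᶠ j in atTop, h.Q (gj j) < h₀.Q f + ε :=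
      hQgj.eventually_lt_const (by linarith)
    obtain ⟨J, hJ⟩ := exists_nat_one_div_lt (show (0:ℝ) < ε/8 by positivity)
    have hev2 : ∀ᶠ j in atTop, h.formNormSq (a n₀ - gj j) < ε/8 := by
      rw [eventually_atTop]
      refine ⟨J, fun j hj => ?_⟩
      have h2 : 1/((j:ℝ)+1) ≤ 1/((J:ℝ)+1) := by
        apply one_div_le_one_div_of_le (by positivity)
        have : (J:ℝ) ≤ (j:ℝ) := by exact_mod_cast hj
        linarith
      linarith [hgj j]
    obtain ⟨j, hj1, hj2⟩ := (hev1.and hev2).exists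
    refine ⟨gj j, hgjA j, ?_, hj1⟩
    have hsum : f - gj j = (f - a n₀) + (a n₀ - gj j) := by funext t; simp
    have hfa₀ : f - a n₀ ∈ h₀.dom := h₀.sub_mem' hf (ha₀ n₀)
    have hag₀ : a n₀ - gj j ∈ h₀.dom := h₀.sub_mem' (ha₀ n₀) (hdom01 (hgjh j))
    have h1 : h₀.formNormSq (f - gj j)
        ≤ 2 * h₀.formNormSq (f - a n₀) + 2 * h₀.formNormSq (a n₀ - gj j) := by
      rw [hsum]
      exact formNormSq_add_le h₀ hfa₀ hag₀
    have h2 : h₀.formNormSq (f - a n₀) < ε/4 := by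
      rw [formNormSq_eq]
      linarith
    have h3 : h₀.formNormSq (a n₀ - gj j) ≤ h.formNormSq (a n₀ - gj j) := by
      rw [formNormSq_eq, formNormSq_eq]
      have := hQ01 _ (h.sub_mem' (haDom n₀) (hgjh j))
      linarith
    have h4 : h₀.formNormSq (a n₀ - gj j) < ε/8 := lt_of_le_of_lt h3 hj2
    linarith
  -- Step: cores of `l` are cores of `h₀`
  have step_core : ∀ C : Set (X → ℝ), IsCore l C → IsCore h₀ C := by
    rintro C ⟨hCsub, hCd⟩
    refine ⟨fun c hc => (main_l c (hCsub hc)).1, ?_⟩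
    intro f hf ε hε
    obtain ⟨g, hgA, hg1, -⟩ := star f hf (ε/8) (by positivity)
    set lamM := max lam 1 with hlamM
    have hlamM1 : (1:ℝ) ≤ lamM := le_max_right _ _
    have hlamMlam : lam ≤ lamM := le_max_left _ _
    have hlamMpos : (0:ℝ) < lamM := lt_of_lt_of_le one_pos hlamM1
    obtain ⟨c, hc, hc2⟩ := hCd g hgA.1 (ε/(8*lamM)) (by positivity)
    have hgc : g - c ∈ l.dom := l.sub_mem' hgA.1 (hCsub hc)
    have hgc₀ : g - c ∈ h₀.dom := (main_l _ hgc).1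
    have h1 : h₀.formNormSq (g - c) ≤ lamM * l.formNormSq (g - c) := by
      rw [formNormSq_eq, formNormSq_eq]
      have ha := (main_l _ hgc).2
      have hb : lam * l.Q (g - c) ≤ lamM * l.Q (g - c) :=
        mul_le_mul_of_nonneg_right hlamMlam (l.Q_nonneg' hgc)
      have hcnd : nd μ (g - c) ^ 2 ≤ lamM * nd μ (g - c) ^ 2 := by
        nlinarith [sq_nonneg (nd μ (g - c))]
      linarith
    have h2 : h₀.formNormSq (g - c) < ε/8 := by
      have : lamM * l.formNormSq (g - c) < lamM * (ε/(8*lamM)) :=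
        mul_lt_mul_of_pos_left hc2 hlamMpos
      have he : lamM * (ε/(8*lamM)) = ε/8 := by field_simp <;> ring
      linarith [h1]
    have hsum : f - c = (f - g) + (g - c) := by funext t; simp
    have hfg₀ : f - g ∈ h₀.dom := h₀.sub_mem' hf (hAdom0 hgA)
    have h3 : h₀.formNormSq (f - c)
        ≤ 2 * h₀.formNormSq (f - g) + 2 * h₀.formNormSq (g - c) := by
      rw [hsum]
      exact formNormSq_add_le h₀ hfg₀ hgc₀
    exact ⟨c, hc, by linarith⟩
  -- Step: Markov property of `h₀`
  have step_markov : Markovian h₀ := by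
    intro ε hε
    obtain ⟨F, hF1, hF2, hF3, hF4⟩ := hMark ε hε
    refine ⟨F, hF1, hF2, hF3, ?_⟩
    have hF0 : F 0 = 0 := hF1 0 ⟨le_refl 0, zero_le_one⟩
    have hFlip : ∀ a b : ℝ, |F a - F b| ≤ |a - b| := by
      have key : ∀ a b : ℝ, a ≤ b → |F b - F a| ≤ |b - a| := by
        intro a b hab
        obtain ⟨hk1, hk2⟩ := hF3 a b hab
        rw [abs_of_nonneg hk1, abs_of_nonneg (by linarith : (0:ℝ) ≤ b - a)]
        exact hk2
      intro a b
      rcases le_total a b with hab | hab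
      · rw [abs_sub_comm (F a) (F b), abs_sub_comm a b]
        exact key a b hab
      · exact key b a hab
    have hFabs : ∀ t : ℝ, |F t| ≤ |t| := by
      intro t
      have := hFlip t 0
      simpa [hF0] using this
    have hFcont : Continuous F := by
      have hlipF : LipschitzWith 1 F := by
        apply LipschitzWith.of_dist_le_mul
        intro a b
        rw [Real.dist_eq, Real.dist_eq]
        simpa using hFlip a b
      exact hlipF.continuous
    intro f hf
    have hfmem : MemLp f 2 μ := h₀.dom_memLp f hf
    have hmemF : MemLp (F ∘ f) 2 μ := by
      refine MemLp.of_le hfmem (hFcont.comp_aestronglyMeasurable hfmem.aestronglyMeasurable)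
        (ae_of_all μ fun x => ?_)
      simpa [Real.norm_eq_abs, Function.comp] using hFabs (f x)
    choose g hgA hg1 hg2 using fun n : ℕ => star f hf (1/((n:ℝ)+1)) (by positivity)
    set b : ℕ → X → ℝ := fun n => F ∘ g n with hb_def
    have hbA : ∀ n, b n ∈ l.Adom := fun n => (hF4 (g n) (hgA n)).1
    have hb₀ : ∀ n, b n ∈ h₀.dom := fun n => hAdom0 (hbA n)
    have hbQ : ∀ n, h₀.Q (b n) ≤ h₀.Q f + 1/((n:ℝ)+1) := by
      intro n
      calc h₀.Q (b n) ≤ h.Q (b n) := hQ01 _ (hA_h (hbA n))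
        _ ≤ h.Q (g n) := (hF4 (g n) (hgA n)).2
        _ ≤ h₀.Q f + 1/((n:ℝ)+1) := (hg2 n).le
    have hgL2 : Tendsto (fun n => eLpNorm (g n - f) 2 μ) atTop (𝓝 0) := by
      apply tendsto_eLpNorm_of_nd (fun n => (l.dom_memLp _ (hgA n).1).sub hfmem)
      have hbnd : ∀ n : ℕ, nd μ (g n - f) ≤ Real.sqrt (1/((n:ℝ)+1)) := by
        intro n
        have h1 : nd μ (f - g n) ^ 2 ≤ h₀.formNormSq (f - g n) :=
          ndsq_le_formNormSq h₀ (h₀.sub_mem' hf (hAdom0 (hgA n)))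
        have h2 : nd μ (g n - f) = nd μ (f - g n) := nd_sub_comm
        rw [h2]
        exact Real.le_sqrt_of_sq_le (le_trans h1 (hg1 n).le)
      apply squeeze_zero (fun n => nd_nonneg) hbnd
      have := tendsto_one_div_add_atTop_nhds_zero_nat.sqrt
      simpa using this
    have hbL2 : Tendsto (fun n => eLpNorm (b n - F ∘ f) 2 μ) atTop (𝓝 0) := by
      have hmono : ∀ n, eLpNorm (b n - F ∘ f) 2 μ ≤ eLpNorm (g n - f) 2 μ := by
        intro n
        apply eLpNorm_mono_ae
        apply ae_of_all
        intro x
        simpa [hb_def, Real.norm_eq_abs, Function.comp] using hFlip (g n x) (f x)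
      exact tendsto_of_tendsto_of_tendsto_of_le_of_le tendsto_const_nhds hgL2
        (fun n => zero_le) hmono
    have hmemdom : F ∘ f ∈ h₀.dom := by
      have := closed_lsc h₀C hb₀ hmemF hbL2 (C := h₀.Q f + 1)
        (fun n => le_trans (hbQ n) (by
          have h1 : 1/((n:ℝ)+1) ≤ 1 := by
            rw [div_le_one (by positivity)]
            have : (0:ℝ) ≤ (n:ℝ) := Nat.cast_nonneg n
            linarith
          linarith))
      exact this.1
    refine ⟨hmemdom, ?_⟩
    apply real_le_of_forall_pos_le_add
    intro δ hδ
    obtain ⟨N, hN⟩ := exists_nat_one_div_lt hδ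
    have hshift : Tendsto (fun k : ℕ => eLpNorm (b (k + N) - F ∘ f) 2 μ) atTop (𝓝 0) :=
      hbL2.comp (tendsto_add_atTop_nat N)
    have := closed_lsc h₀C (fun k => hb₀ (k + N)) hmemF hshift (C := h₀.Q f + δ)
      (fun k => by
        have hle : 1/((((k + N : ℕ)):ℝ)+1) ≤ 1/((N:ℝ)+1) := by
          apply one_div_le_one_div_of_le (by positivity)
          have : (N:ℝ) ≤ (((k + N : ℕ)):ℝ) := by exact_mod_cast Nat.le_add_left N k
          linarith
        have h2 := hbQ (k + N)
        linarith)
    exact this.2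
  -- Step: regularity of `h₀`
  have step_regular : Regular h₀ := ⟨C₀, hC₀cc, step_core C₀ ⟨hC₀core.1, hC₀core.2⟩, hC₀unif⟩
  exact ⟨h₀C, step_markov, step_regular, fun f hf => (main_l f hf).1, step_core⟩

end SmallTime
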